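/- arXiv:2201.03633 — 6 statements merged into one kernel-verified Lean document; each statement's English description precedes it below -/
import Mathlib

section
/- Let G be a simple graph and let 𝒯 be a collection of triangles of G (3-element sets of pairwise adjacent vertices) such that every edge of G is contained in exactly one triangle of 𝒯. Suppose there is a map m : 𝒯 → V(G) with m(T) ∈ T for every T ∈ 𝒯 (the 'marked angle' of T), such that for every vertex v the number of triangles T ∈ 𝒯 with v ∈ T and m(T) ≠ v is at most 2. Then col_ve(G) ≤ 4. -/
namespace VEGame

open Classical


variable {V : Type*}

/-- The set of vertices marked after Alice's first `r` moves. -/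
def mVerts (a : ℕ → V) (r : ℕ) : Set V := {v | ∃ i < r, a i = v}

/-- The set of edges marked after Bob's first `r` moves. -/
def mEdges (b : ℕ → Sym2 V) (r : ℕ) : Set (Sym2 V) := {e | ∃ i < r, b i = e}

/-- Alice's sequence of moves is legal: whenever an unmarked vertex remains, she
marks a previously unmarked vertex.  (If no unmarked vertex remains the game has
ended; the remaining values of `a` are irrelevant, as they do not change the set
of marked vertices.) -/
def AliceLegal (a : ℕ → V) : Prop :=
  ∀ r, (∃ v, v ∉ mVerts a r) → a r ∉ mVerts a r

/-- Bob's sequence of moves is legal: whenever an unmarked edge of `G` remains,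
he marks a previously unmarked edge of `G`. -/
def BobLegal (G : SimpleGraph V) (b : ℕ → Sym2 V) : Prop :=
  ∀ r, (∃ e ∈ G.edgeSet, e ∉ mEdges b r) → b r ∈ G.edgeSet ∧ b r ∉ mEdges b r

/-- The score of vertex `v` at the end of round `r` (rounds are numbered from 0):
`0` if `v` is marked, and otherwise the number of marked edges incident to `v`. -/
noncomputable def score (G : SimpleGraph V) (a : ℕ → V) (b : ℕ → Sym2 V)
    (r : ℕ) (v : V) : ℕ∞ :=
  if v ∈ mVerts a (r + 1) then 0
  else {e | e ∈ G.edgeSet ∧ v ∈ e ∧ e ∈ mEdges b (r + 1)}.encard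

/-- `a` is the sequence of Alice's moves when she follows strategy `A`
(a function of the history, i.e. of Bob's moves so far). -/
def ConsistentA (A : List (Sym2 V) → V) (a : ℕ → V) (b : ℕ → Sym2 V) : Prop :=
  ∀ r, a r = A (List.ofFn fun i : Fin r => b i)

/-- `b` is the sequence of Bob's moves when he follows strategy `B`
(a function of the history, i.e. of Alice's moves so far). -/
def ConsistentB (B : List V → Sym2 V) (a : ℕ → V) (b : ℕ → Sym2 V) : Prop :=
  ∀ r, b r = B (List.ofFn fun i : Fin (r + 1) => a i)

/-- Bob has a winning strategy for score `s`: a legal strategy which, against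
every legal play of Alice, forces some round and some vertex to have score at
least `s`. -/
def BobWins (G : SimpleGraph V) (s : ℕ) : Prop :=
  ∃ B : List V → Sym2 V,
    (∀ a b, ConsistentB B a b → AliceLegal a → BobLegal G b) ∧
    (∀ a b, ConsistentB B a b → AliceLegal a →
      ∃ r v, (s : ℕ∞) ≤ score G a b r v)

/-- The vertex-edge coloring number of `G`: one plus the supremum of all scores
for which Bob has a winning strategy. -/
noncomputable def colVE (G : SimpleGraph V) : ℕ∞ :=
  (⨆ s ∈ {s : ℕ | BobWins G s}, (s : ℕ∞)) + 1

end VEGame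

open VEGame

section AngleMarkingAux

variable {V : Type*}

/-- The invariant maintained by Alice in the vertex-edge marking game:
`M` is the set of marked vertices, `F` the set of marked edges. -/
def Good (G : SimpleGraph V) (𝒯 : Set (Finset V)) (m : Finset V → V)
    (M : Set V) (F : Set (Sym2 V)) : Prop :=
  (∀ T ∈ 𝒯, ∀ e ∈ F, e ∈ G.edgeSet → (∀ x ∈ e, x ∈ T) → m T ∈ M) ∧
  (∀ v, v ∉ M → ∀ T ∈ 𝒯, v ∈ T → m T ≠ v →
    ∀ y₁, y₁ ∈ T → y₁ ≠ v → s(v, y₁) ∈ F →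
    ∀ y₂, y₂ ∈ T → y₂ ≠ v → s(v, y₂) ∈ F → y₁ = y₂) ∧
  (∀ T ∈ 𝒯, ∀ p, p ∈ T → ∀ q, q ∈ T → ∀ s', s' ∈ T →
    p ≠ q → p ≠ s' → q ≠ s' → m T = s' →
    s(p, s') ∈ F → s(q, s') ∈ F → s(p, q) ∉ F → p ∈ M ∨ q ∈ M)

lemma three_of {T : Finset V} (h3 : T.card = 3) {u w : V} (hu : u ∈ T) (hw : w ∈ T)
    (huw : u ≠ w) :
    ∃ z, z ∈ T ∧ z ≠ u ∧ z ≠ w ∧ ∀ x ∈ T, x = u ∨ x = w ∨ x = z := by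
  classical
  have hsub : ({u, w} : Finset V) ⊆ T := by
    intro x hx
    rcases Finset.mem_insert.mp hx with h | h
    · exact h ▸ hu
    · exact (Finset.mem_singleton.mp h) ▸ hw
  have hcard : (T \ {u, w}).card = 1 := by
    rw [Finset.card_sdiff_of_subset hsub, h3, Finset.card_pair huw]
  obtain ⟨z, hz⟩ := Finset.card_eq_one.mp hcard
  have hzmem : z ∈ T \ ({u, w} : Finset V) := by rw [hz]; exact Finset.mem_singleton_self z
  have hzT : z ∈ T := (Finset.mem_sdiff.mp hzmem).1
  have hznot : z ∉ ({u, w} : Finset V) := (Finset.mem_sdiff.mp hzmem).2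
  refine ⟨z, hzT, ?_, ?_, ?_⟩
  · intro h; exact hznot (by simp [h])
  · intro h; exact hznot (by simp [h])
  · intro x hx
    by_cases hxu : x = u
    · exact Or.inl hxu
    by_cases hxw : x = w
    · exact Or.inr (Or.inl hxw)
    have : x ∈ T \ ({u, w} : Finset V) := by
      rw [Finset.mem_sdiff]; exact ⟨hx, by simp [hxu, hxw]⟩
    rw [hz] at this
    exact Or.inr (Or.inr (Finset.mem_singleton.mp this))

lemma good_of_all {G : SimpleGraph V} {𝒯 : Set (Finset V)} {m : Finset V → V}
    {M : Set V} {F : Set (Sym2 V)} (hall : ∀ x, x ∈ M) : Good G 𝒯 m M F := by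
  refine ⟨fun T _ e _ _ _ => hall _, fun v hv => absurd (hall v) hv,
    fun T _ p _ q _ s' _ _ _ _ _ _ _ _ => Or.inl (hall p)⟩

lemma good_insert_vertex {G : SimpleGraph V} {𝒯 : Set (Finset V)} {m : Finset V → V}
    {M : Set V} {F : Set (Sym2 V)} (h : Good G 𝒯 m M F) (v : V) :
    Good G 𝒯 m (insert v M) F := by
  obtain ⟨h1, h2, h3⟩ := h
  refine ⟨fun T hT e he hE hs => Set.mem_insert_of_mem _ (h1 T hT e he hE hs),
    fun v' hv' => h2 v' (fun hmem => hv' (Set.mem_insert_of_mem _ hmem)),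
    fun T hT p hp q hq s' hs' h4 h5 h6 h7 h8 h9 h10 =>
      (h3 T hT p hp q hq s' hs' h4 h5 h6 h7 h8 h9 h10).imp
        (Set.mem_insert_of_mem _) (Set.mem_insert_of_mem _)⟩

lemma good_junk {G : SimpleGraph V} {𝒯 : Set (Finset V)} {m : Finset V → V}
    (htri : ∀ T ∈ 𝒯, T.card = 3 ∧ ∀ x ∈ T, ∀ y ∈ T, x ≠ y → G.Adj x y)
    {M : Set V} {F : Set (Sym2 V)} {e : Sym2 V}
    (he : e ∉ G.edgeSet ∨ e ∈ F) (h : Good G 𝒯 m M F) :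
    Good G 𝒯 m M (insert e F) := by
  rcases he with he | he
  swap
  · rwa [Set.insert_eq_self.mpr he]
  obtain ⟨h1, h2, h3⟩ := h
  have hedgemem : ∀ T ∈ 𝒯, ∀ x ∈ T, ∀ y ∈ T, x ≠ y → s(x, y) ∈ G.edgeSet := by
    intro T hT x hx y hy hxy
    exact (htri T hT).2 x hx y hy hxy
  refine ⟨?_, ?_, ?_⟩
  · intro T hT e' he' hE hs
    rcases Set.mem_insert_iff.mp he' with rfl | he'
    · exact absurd hE he
    · exact h1 T hT e' he' hE hs
  · intro v hv T hT hvT hmv y₁ hy₁ hy₁v hF₁ y₂ hy₂ hy₂v hF₂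
    have hF₁' : s(v, y₁) ∈ F := by
      rcases Set.mem_insert_iff.mp hF₁ with h' | h'
      · exact absurd (h' ▸ hedgemem T hT v hvT y₁ hy₁ (Ne.symm hy₁v)) he
      · exact h'
    have hF₂' : s(v, y₂) ∈ F := by
      rcases Set.mem_insert_iff.mp hF₂ with h' | h'
      · exact absurd (h' ▸ hedgemem T hT v hvT y₂ hy₂ (Ne.symm hy₂v)) he
      · exact h'
    exact h2 v hv T hT hvT hmv y₁ hy₁ hy₁v hF₁' y₂ hy₂ hy₂v hF₂'
  · intro T hT p hp q hq s' hs' hpq hps hqs hms hF₁ hF₂ hF₃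
    have hF₁' : s(p, s') ∈ F := by
      rcases Set.mem_insert_iff.mp hF₁ with h' | h'
      · exact absurd (h' ▸ hedgemem T hT p hp s' hs' hps) he
      · exact h'
    have hF₂' : s(q, s') ∈ F := by
      rcases Set.mem_insert_iff.mp hF₂ with h' | h'
      · exact absurd (h' ▸ hedgemem T hT q hq s' hs' hqs) he
      · exact h'
    exact h3 T hT p hp q hq s' hs' hpq hps hqs hms hF₁' hF₂'
      (fun hmem => hF₃ (Set.mem_insert_of_mem _ hmem))

lemma good_insert_aux {G : SimpleGraph V} {𝒯 : Set (Finset V)} {m : Finset V → V}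
    {M : Set V} {F : Set (Sym2 V)} {T : Finset V} {u w z v : V}
    (hT : T ∈ 𝒯) (hu : u ∈ T) (hw : w ∈ T) (hz : z ∈ T)
    (huw : u ≠ w) (hzu : z ≠ u) (hzw : z ≠ w)
    (hdesc : ∀ x ∈ T, x = u ∨ x = w ∨ x = z)
    (huniq : ∀ T' ∈ 𝒯, u ∈ T' → w ∈ T' → T' = T)
    (hG : Good G 𝒯 m M F)
    (hC1 : m T ∈ insert v M)
    (hC2 : m T ≠ u → u ∉ insert v M → s(u, z) ∉ F)
    (hC3 : m T ≠ w → w ∉ insert v M → s(w, z) ∉ F)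
    (hC4 : m T = u → s(u, z) ∈ F → s(w, z) ∉ F → (w ∈ insert v M ∨ z ∈ insert v M))
    (hC5 : m T = w → s(w, z) ∈ F → s(u, z) ∉ F → (u ∈ insert v M ∨ z ∈ insert v M)) :
    Good G 𝒯 m (insert v M) (insert s(u, w) F) := by
  obtain ⟨h1, h2, h3⟩ := hG
  refine ⟨?_, ?_, ?_⟩
  · -- J1
    intro T' hT' e' he' hE hs
    rcases Set.mem_insert_iff.mp he' with rfl | he'
    · have : T' = T := huniq T' hT' (hs u (by simp)) (hs w (by simp))
      rw [this]; exact hC1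
    · exact Set.mem_insert_of_mem _ (h1 T' hT' e' he' hE hs)
  · -- J2
    intro v' hv' T' hT' hv'T hmv' y₁ hy₁ hy₁v hF₁ y₂ hy₂ hy₂v hF₂
    have hv'M : v' ∉ M := fun h => hv' (Set.mem_insert_of_mem _ h)
    have key : ∀ yA, yA ∈ T' → yA ≠ v' → s(v', yA) = s(u, w) →
        ∀ yB, yB ∈ T' → yB ≠ v' → s(v', yB) ∈ F → yA = yB := by
      intro yA hyA hyAv heq yB hyB hyBv hFB
      rcases Sym2.eq_iff.mp heq with ⟨rfl, rfl⟩ | ⟨rfl, rfl⟩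
      · -- v' = u, yA = w
        have hTT : T' = T := huniq T' hT' hv'T hyA
        subst hTT
        rcases hdesc yB hyB with rfl | rfl | rfl
        · exact absurd rfl hyBv
        · rfl
        · exact absurd hFB (hC2 hmv' hv')
      · -- v' = w, yA = u
        have hTT : T' = T := huniq T' hT' hyA hv'T
        subst hTT
        rcases hdesc yB hyB with rfl | rfl | rfl
        · rfl
        · exact absurd rfl hyBv
        · exact absurd hFB (hC3 hmv' hv')
    rcases Set.mem_insert_iff.mp hF₁ with h₁ | h₁ <;>
      rcases Set.mem_insert_iff.mp hF₂ with h₂ | h₂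
    · -- both equal the new edge
      have := h₁.trans h₂.symm
      rcases Sym2.eq_iff.mp this with ⟨_, h⟩ | ⟨h', h⟩
      · exact h
      · exact absurd h'.symm hy₂v
    · exact key y₁ hy₁ hy₁v h₁ y₂ hy₂ hy₂v h₂
    · exact (key y₂ hy₂ hy₂v h₂ y₁ hy₁ hy₁v h₁).symm
    · exact h2 v' hv'M T' hT' hv'T hmv' y₁ hy₁ hy₁v h₁ y₂ hy₂ hy₂v h₂
  · -- J3
    intro T' hT' p hp q hq s' hs' hpq hps hqs hms hF₁ hF₂ hF₃
    have hF₃' : s(p, q) ∉ F := fun h => hF₃ (Set.mem_insert_of_mem _ h)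
    rcases Set.mem_insert_iff.mp hF₁ with h₁ | h₁
    · rcases Sym2.eq_iff.mp h₁ with ⟨rfl, rfl⟩ | ⟨rfl, rfl⟩
      · -- p = u, s' = w
        have hTT : T' = T := huniq T' hT' hp hs'
        subst hTT
        rcases hdesc q hq with rfl | rfl | rfl
        · exact absurd rfl hpq
        · exact absurd rfl hqs
        · -- q = z
          have hFq : s(q, s') ∈ F := by
            rcases Set.mem_insert_iff.mp hF₂ with h' | h'
            · rcases Sym2.eq_iff.mp h' with ⟨h'', _⟩ | ⟨h'', _⟩
              · exact absurd h'' hzu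
              · exact absurd h'' hzw
            · exact h'
          rw [Sym2.eq_swap] at hFq
          exact hC5 hms hFq hF₃'
      · -- p = w, s' = u
        have hTT : T' = T := huniq T' hT' hs' hp
        subst hTT
        rcases hdesc q hq with rfl | rfl | rfl
        · exact absurd rfl hqs
        · exact absurd rfl hpq
        · -- q = z
          have hFq : s(q, s') ∈ F := by
            rcases Set.mem_insert_iff.mp hF₂ with h' | h'
            · rcases Sym2.eq_iff.mp h' with ⟨h'', _⟩ | ⟨h'', _⟩
              · exact absurd h'' hzu
              · exact absurd h'' hzw
            · exact h'
          rw [Sym2.eq_swap] at hFq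
          exact hC4 hms hFq hF₃'
    · rcases Set.mem_insert_iff.mp hF₂ with h₂ | h₂
      · rcases Sym2.eq_iff.mp h₂ with ⟨rfl, rfl⟩ | ⟨rfl, rfl⟩
        · -- q = u, s' = w
          have hTT : T' = T := huniq T' hT' hq hs'
          subst hTT
          rcases hdesc p hp with rfl | rfl | rfl
          · exact absurd rfl hpq
          · exact absurd rfl hps
          · -- p = z
            have hFp : s(p, s') ∈ F := h₁
            rw [Sym2.eq_swap] at hFp
            rw [Sym2.eq_swap] at hF₃'
            exact (hC5 hms hFp hF₃').symm
        · -- q = w, s' = u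
          have hTT : T' = T := huniq T' hT' hs' hq
          subst hTT
          rcases hdesc p hp with rfl | rfl | rfl
          · exact absurd rfl hps
          · exact absurd rfl hpq
          · -- p = z
            have hFp : s(p, s') ∈ F := h₁
            rw [Sym2.eq_swap] at hFp
            rw [Sym2.eq_swap] at hF₃'
            exact (hC4 hms hFp hF₃').symm
      · exact (h3 T' hT' p hp q hq s' hs' hpq hps hqs hms h₁ h₂ hF₃').imp
          (Set.mem_insert_of_mem _) (Set.mem_insert_of_mem _)

lemma step_edge {G : SimpleGraph V} {𝒯 : Set (Finset V)} {m : Finset V → V}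
    (htri : ∀ T ∈ 𝒯, T.card = 3 ∧ ∀ x ∈ T, ∀ y ∈ T, x ≠ y → G.Adj x y)
    (hedge : ∀ e ∈ G.edgeSet, ∃! T, T ∈ 𝒯 ∧ ∀ x ∈ e, x ∈ T)
    (hm : ∀ T ∈ 𝒯, m T ∈ T)
    {M : Set V} {F : Set (Sym2 V)} (hG : Good G 𝒯 m M F) {u w : V}
    (he : s(u, w) ∈ G.edgeSet) (heF : s(u, w) ∉ F) (hex : ∃ x, x ∉ M) :
    ∃ v, v ∉ M ∧ Good G 𝒯 m (insert v M) (insert s(u, w) F) := by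
  classical
  obtain ⟨w0, hw0⟩ := hex
  have huw : u ≠ w := (G.mem_edgeSet.mp he).ne
  obtain ⟨T, ⟨hT, hTsub⟩, huniqT⟩ := hedge s(u, w) he
  have hu : u ∈ T := hTsub u (by simp)
  have hw : w ∈ T := hTsub w (by simp)
  have huniq : ∀ T' ∈ 𝒯, u ∈ T' → w ∈ T' → T' = T := by
    intro T' h1 h2 h3
    exact huniqT T' ⟨h1, by
      intro x hx
      rcases Sym2.mem_iff.mp hx with rfl | rfl
      exacts [h2, h3]⟩
  obtain ⟨z, hz, hzu, hzw, hdesc⟩ := three_of (htri T hT).1 hu hw huw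
  have hedgeuz : s(u, z) ∈ G.edgeSet := G.mem_edgeSet.mpr ((htri T hT).2 u hu z hz (Ne.symm hzu))
  have hedgewz : s(w, z) ∈ G.edgeSet := G.mem_edgeSet.mpr ((htri T hT).2 w hw z hz (Ne.symm hzw))
  have hMuz : s(u, z) ∈ F → m T ∈ M := by
    intro h
    refine hG.1 T hT _ h hedgeuz ?_
    intro x hx; rcases Sym2.mem_iff.mp hx with rfl | rfl
    exacts [hu, hz]
  have hMwz : s(w, z) ∈ F → m T ∈ M := by
    intro h
    refine hG.1 T hT _ h hedgewz ?_
    intro x hx; rcases Sym2.mem_iff.mp hx with rfl | rfl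
    exacts [hw, hz]
  have hins : ∀ (x : V) (S : Set V), x ∈ insert x S := fun x S => Set.mem_insert x S
  have hinsm : ∀ {x : V} (y : V) {S : Set V}, x ∈ S → x ∈ insert y S := by
    intro x y S h; exact Set.mem_insert_of_mem y h
  rcases hdesc (m T) (hm T hT) with hmu | hmw | hmz
  · -- m T = u
    have hC2 : ∀ v', m T ≠ u → u ∉ insert v' M → s(u, z) ∉ F := fun _ h => absurd hmu h
    have hC5 : ∀ v', m T = w → s(w, z) ∈ F → s(u, z) ∉ F →
        (u ∈ insert v' M ∨ z ∈ insert v' M) := fun _ h => absurd (hmu.symm.trans h) huw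
    by_cases hwz : s(w, z) ∈ F
    · have hmM : m T ∈ M := hMwz hwz
      have hC4 : ∀ v', m T = u → s(u, z) ∈ F → s(w, z) ∉ F →
          (w ∈ insert v' M ∨ z ∈ insert v' M) := fun _ _ _ h => absurd hwz h
      by_cases hwM : w ∈ M
      · exact ⟨w0, hw0, good_insert_aux hT hu hw hz huw hzu hzw hdesc huniq hG
          (hinsm _ hmM) (hC2 _) (fun _ h => absurd (hinsm _ hwM) h) (hC4 _) (hC5 _)⟩
      · exact ⟨w, hwM, good_insert_aux hT hu hw hz huw hzu hzw hdesc huniq hG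
          (hinsm _ hmM) (hC2 _) (fun _ h => absurd (hins w M) h) (hC4 _) (hC5 _)⟩
    · have hC3 : ∀ v', m T ≠ w → w ∉ insert v' M → s(w, z) ∉ F := fun _ _ _ => hwz
      by_cases huz : s(u, z) ∈ F
      · have hmM : m T ∈ M := hMuz huz
        by_cases hwM : w ∈ M
        · exact ⟨w0, hw0, good_insert_aux hT hu hw hz huw hzu hzw hdesc huniq hG
            (hinsm _ hmM) (hC2 _) (hC3 _) (fun _ _ _ => Or.inl (hinsm _ hwM)) (hC5 _)⟩
        · exact ⟨w, hwM, good_insert_aux hT hu hw hz huw hzu hzw hdesc huniq hG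
            (hinsm _ hmM) (hC2 _) (hC3 _) (fun _ _ _ => Or.inl (hins w M)) (hC5 _)⟩
      · have hC4 : ∀ v', m T = u → s(u, z) ∈ F → s(w, z) ∉ F →
            (w ∈ insert v' M ∨ z ∈ insert v' M) := fun _ _ h => absurd h huz
        by_cases huM : u ∈ M
        · exact ⟨w0, hw0, good_insert_aux hT hu hw hz huw hzu hzw hdesc huniq hG
            (hinsm _ (hmu ▸ huM)) (hC2 _) (hC3 _) (hC4 _) (hC5 _)⟩
        · exact ⟨u, huM, good_insert_aux hT hu hw hz huw hzu hzw hdesc huniq hG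
            (hmu ▸ hins u M) (hC2 _) (hC3 _) (hC4 _) (hC5 _)⟩
  · -- m T = w
    have hC3 : ∀ v', m T ≠ w → w ∉ insert v' M → s(w, z) ∉ F := fun _ h => absurd hmw h
    have hC4 : ∀ v', m T = u → s(u, z) ∈ F → s(w, z) ∉ F →
        (w ∈ insert v' M ∨ z ∈ insert v' M) := fun _ h => absurd (hmw.symm.trans h).symm huw
    by_cases huz : s(u, z) ∈ F
    · have hmM : m T ∈ M := hMuz huz
      have hC5 : ∀ v', m T = w → s(w, z) ∈ F → s(u, z) ∉ F →
          (u ∈ insert v' M ∨ z ∈ insert v' M) := fun _ _ _ h => absurd huz h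
      by_cases huM : u ∈ M
      · exact ⟨w0, hw0, good_insert_aux hT hu hw hz huw hzu hzw hdesc huniq hG
          (hinsm _ hmM) (fun _ h => absurd (hinsm _ huM) h) (hC3 _) (hC4 _) (hC5 _)⟩
      · exact ⟨u, huM, good_insert_aux hT hu hw hz huw hzu hzw hdesc huniq hG
          (hinsm _ hmM) (fun _ h => absurd (hins u M) h) (hC3 _) (hC4 _) (hC5 _)⟩
    · have hC2 : ∀ v', m T ≠ u → u ∉ insert v' M → s(u, z) ∉ F := fun _ _ _ => huz
      by_cases hwz : s(w, z) ∈ F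
      · have hmM : m T ∈ M := hMwz hwz
        by_cases huM : u ∈ M
        · exact ⟨w0, hw0, good_insert_aux hT hu hw hz huw hzu hzw hdesc huniq hG
            (hinsm _ hmM) (hC2 _) (hC3 _) (hC4 _) (fun _ _ _ => Or.inl (hinsm _ huM))⟩
        · exact ⟨u, huM, good_insert_aux hT hu hw hz huw hzu hzw hdesc huniq hG
            (hinsm _ hmM) (hC2 _) (hC3 _) (hC4 _) (fun _ _ _ => Or.inl (hins u M))⟩
      · have hC5 : ∀ v', m T = w → s(w, z) ∈ F → s(u, z) ∉ F →
            (u ∈ insert v' M ∨ z ∈ insert v' M) := fun _ _ h => absurd h hwz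
        by_cases hwM : w ∈ M
        · exact ⟨w0, hw0, good_insert_aux hT hu hw hz huw hzu hzw hdesc huniq hG
            (hinsm _ (hmw ▸ hwM)) (hC2 _) (hC3 _) (hC4 _) (hC5 _)⟩
        · exact ⟨w, hwM, good_insert_aux hT hu hw hz huw hzu hzw hdesc huniq hG
            (hmw ▸ hins w M) (hC2 _) (hC3 _) (hC4 _) (hC5 _)⟩
  · -- m T = z
    have hmTu : m T ≠ u := fun h => hzu (hmz.symm.trans h)
    have hmTw : m T ≠ w := fun h => hzw (hmz.symm.trans h)
    have hC4 : ∀ v', m T = u → s(u, z) ∈ F → s(w, z) ∉ F →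
        (w ∈ insert v' M ∨ z ∈ insert v' M) := fun _ h => absurd h hmTu
    have hC5 : ∀ v', m T = w → s(w, z) ∈ F → s(u, z) ∉ F →
        (u ∈ insert v' M ∨ z ∈ insert v' M) := fun _ h => absurd h hmTw
    by_cases huz : s(u, z) ∈ F <;> by_cases hwz : s(w, z) ∈ F
    · -- both: use J3
      have hzM : z ∈ M := hmz ▸ hMuz huz
      have hor : u ∈ M ∨ w ∈ M :=
        hG.2.2 T hT u hu w hw z hz huw (Ne.symm hzu) (Ne.symm hzw) hmz huz hwz heF
      by_cases huM : u ∈ M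
      · by_cases hwM : w ∈ M
        · exact ⟨w0, hw0, good_insert_aux hT hu hw hz huw hzu hzw hdesc huniq hG
            (hmz ▸ hinsm _ hzM) (fun _ h => absurd (hinsm _ huM) h)
            (fun _ h => absurd (hinsm _ hwM) h) (hC4 _) (hC5 _)⟩
        · exact ⟨w, hwM, good_insert_aux hT hu hw hz huw hzu hzw hdesc huniq hG
            (hmz ▸ hinsm _ hzM) (fun _ h => absurd (hinsm _ huM) h)
            (fun _ h => absurd (hins w M) h) (hC4 _) (hC5 _)⟩
      · have hwM : w ∈ M := hor.resolve_left huM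
        exact ⟨u, huM, good_insert_aux hT hu hw hz huw hzu hzw hdesc huniq hG
          (hmz ▸ hinsm _ hzM) (fun _ h => absurd (hins u M) h)
          (fun _ h => absurd (hinsm _ hwM) h) (hC4 _) (hC5 _)⟩
    · -- only uz
      have hzM : z ∈ M := hmz ▸ hMuz huz
      have hC3 : ∀ v', m T ≠ w → w ∉ insert v' M → s(w, z) ∉ F := fun _ _ _ => hwz
      by_cases huM : u ∈ M
      · exact ⟨w0, hw0, good_insert_aux hT hu hw hz huw hzu hzw hdesc huniq hG
          (hmz ▸ hinsm _ hzM) (fun _ h => absurd (hinsm _ huM) h) (hC3 _) (hC4 _) (hC5 _)⟩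
      · exact ⟨u, huM, good_insert_aux hT hu hw hz huw hzu hzw hdesc huniq hG
          (hmz ▸ hinsm _ hzM) (fun _ h => absurd (hins u M) h) (hC3 _) (hC4 _) (hC5 _)⟩
    · -- only wz
      have hzM : z ∈ M := hmz ▸ hMwz hwz
      have hC2 : ∀ v', m T ≠ u → u ∉ insert v' M → s(u, z) ∉ F := fun _ _ _ => huz
      by_cases hwM : w ∈ M
      · exact ⟨w0, hw0, good_insert_aux hT hu hw hz huw hzu hzw hdesc huniq hG
          (hmz ▸ hinsm _ hzM) (hC2 _) (fun _ h => absurd (hinsm _ hwM) h) (hC4 _) (hC5 _)⟩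
      · exact ⟨w, hwM, good_insert_aux hT hu hw hz huw hzu hzw hdesc huniq hG
          (hmz ▸ hinsm _ hzM) (hC2 _) (fun _ h => absurd (hins w M) h) (hC4 _) (hC5 _)⟩
    · -- neither
      have hC2 : ∀ v', m T ≠ u → u ∉ insert v' M → s(u, z) ∉ F := fun _ _ _ => huz
      have hC3 : ∀ v', m T ≠ w → w ∉ insert v' M → s(w, z) ∉ F := fun _ _ _ => hwz
      by_cases hzM : z ∈ M
      · exact ⟨w0, hw0, good_insert_aux hT hu hw hz huw hzu hzw hdesc huniq hG
          (hmz ▸ hinsm _ hzM) (hC2 _) (hC3 _) (hC4 _) (hC5 _)⟩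
      · exact ⟨z, hzM, good_insert_aux hT hu hw hz huw hzu hzw hdesc huniq hG
          (hmz ▸ hins z M) (hC2 _) (hC3 _) (hC4 _) (hC5 _)⟩

lemma master {G : SimpleGraph V} {𝒯 : Set (Finset V)} {m : Finset V → V}
    (hV : Nonempty V)
    (htri : ∀ T ∈ 𝒯, T.card = 3 ∧ ∀ x ∈ T, ∀ y ∈ T, x ≠ y → G.Adj x y)
    (hedge : ∀ e ∈ G.edgeSet, ∃! T, T ∈ 𝒯 ∧ ∀ x ∈ e, x ∈ T)
    (hm : ∀ T ∈ 𝒯, m T ∈ T) :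
    ∀ (M : Set V) (F : Set (Sym2 V)) (e : Sym2 V), ∃ v : V,
      ((∃ x, x ∉ M) → v ∉ M) ∧
      (Good G 𝒯 m M F → Good G 𝒯 m (insert v M) (insert e F)) := by
  classical
  intro M F e
  by_cases hex : ∃ x, x ∉ M
  · by_cases hG : Good G 𝒯 m M F
    · by_cases hE : e ∈ G.edgeSet ∧ e ∉ F
      · induction e using Sym2.ind with
        | _ u w =>
          obtain ⟨v, hv, hGood⟩ := step_edge htri hedge hm hG hE.1 hE.2 hex
          exact ⟨v, fun _ => hv, fun _ => hGood⟩
      · obtain ⟨w0, hw0⟩ := hex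
        have he' : e ∉ G.edgeSet ∨ e ∈ F := by
          by_cases h : e ∈ G.edgeSet
          · exact Or.inr (by_contra fun hc => hE ⟨h, hc⟩)
          · exact Or.inl h
        exact ⟨w0, fun _ => hw0, fun hG' => good_insert_vertex (good_junk htri he' hG') w0⟩
    · obtain ⟨w0, hw0⟩ := hex
      exact ⟨w0, fun _ => hw0, fun hG' => absurd hG' hG⟩
  · obtain ⟨v⟩ := hV
    have hall : ∀ x, x ∈ M := by
      intro x; by_contra hc; exact hex ⟨x, hc⟩
    exact ⟨v, fun h => absurd h hex,
      fun _ => good_of_all (fun x => Set.mem_insert_of_mem _ (hall x))⟩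

lemma score_bound {G : SimpleGraph V} {𝒯 : Set (Finset V)} {m : Finset V → V}
    (hedge : ∀ e ∈ G.edgeSet, ∃! T, T ∈ 𝒯 ∧ ∀ x ∈ e, x ∈ T)
    (hcount : ∀ v : V, {T | T ∈ 𝒯 ∧ v ∈ T ∧ m T ≠ v}.encard ≤ 2)
    {M : Set V} {F : Set (Sym2 V)} (hG : Good G 𝒯 m M F) {v : V} (hv : v ∉ M) :
    Set.encard {e : Sym2 V | e ∈ G.edgeSet ∧ v ∈ e ∧ e ∈ F} ≤ 2 := by
  classical
  set S : Set (Sym2 V) := {e : Sym2 V | e ∈ G.edgeSet ∧ v ∈ e ∧ e ∈ F} with hS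
  set f : Sym2 V → Finset V :=
    fun e => if he : e ∈ G.edgeSet then (hedge e he).choose else ∅ with hf
  have hfspec : ∀ e (he : e ∈ G.edgeSet),
      f e ∈ 𝒯 ∧ (∀ x ∈ e, x ∈ f e) ∧ ∀ T', T' ∈ 𝒯 → (∀ x ∈ e, x ∈ T') → T' = f e := by
    intro e he
    have h1 := (hedge e he).choose_spec
    have hfe : f e = (hedge e he).choose := by rw [hf]; simp [he]
    rw [hfe]
    exact ⟨h1.1.1, h1.1.2, fun T' h2 h3 => h1.2 T' ⟨h2, h3⟩⟩
  have hmaps : ∀ e ∈ S, f e ∈ {T | T ∈ 𝒯 ∧ v ∈ T ∧ m T ≠ v} := by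
    rintro e ⟨h1, h2, h3⟩
    obtain ⟨hT, hsub, _⟩ := hfspec e h1
    refine ⟨hT, hsub v h2, ?_⟩
    intro hmv
    exact hv (hmv ▸ hG.1 (f e) hT e h3 h1 hsub)
  have hinj : Set.InjOn f S := by
    rintro e₁ ⟨h11, h12, h13⟩ e₂ ⟨h21, h22, h23⟩ hfe
    obtain ⟨hT1, hsub1, _⟩ := hfspec e₁ h11
    obtain ⟨hT2, hsub2, _⟩ := hfspec e₂ h21
    obtain ⟨y₁, rfl⟩ := Sym2.mem_iff_exists.mp h12
    obtain ⟨y₂, rfl⟩ := Sym2.mem_iff_exists.mp h22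
    have hy₁v : y₁ ≠ v := by
      intro h; exact G.not_isDiag_of_mem_edgeSet h11 (by simp [h])
    have hy₂v : y₂ ≠ v := by
      intro h; exact G.not_isDiag_of_mem_edgeSet h21 (by simp [h])
    have hmv : m (f s(v, y₁)) ≠ v := (hmaps _ ⟨h11, h12, h13⟩).2.2
    have hy₂T : y₂ ∈ f s(v, y₁) := by rw [hfe]; exact hsub2 y₂ (by simp)
    have heq : y₁ = y₂ := hG.2.1 v hv (f s(v, y₁)) hT1 (hsub1 v (by simp)) hmv
      y₁ (hsub1 y₁ (by simp)) hy₁v h13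
      y₂ hy₂T hy₂v h23
    rw [heq]
  calc S.encard = (f '' S).encard := (hinj.encard_image).symm
    _ ≤ Set.encard {T | T ∈ 𝒯 ∧ v ∈ T ∧ m T ≠ v} := Set.encard_mono (Set.image_subset_iff.mpr hmaps)
    _ ≤ 2 := hcount v

noncomputable def seqOfStep (step : List V → V) : ℕ → V
  | n => step (List.ofFn fun i : Fin n => seqOfStep step i)
termination_by n => n
decreasing_by exact i.isLt

lemma seqOfStep_eq (step : List V → V) (n : ℕ) :
    seqOfStep step n = step (List.ofFn fun i : Fin n => seqOfStep step i) := by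
  rw [seqOfStep]

lemma take_ofFn_seq (a : ℕ → V) {k r : ℕ} (h : k ≤ r) :
    (List.ofFn fun i : Fin r => a i).take k = List.ofFn fun i : Fin k => a i := by
  apply List.ext_getElem
  · simp [h]
  · intro n h1 h2
    simp [List.getElem_take]

end AngleMarkingAux

/-- **Main Theorem.** Let `G` be a simple graph and `𝒯` a collection of triangles of `G`
(3-element sets of pairwise adjacent vertices) such that every edge of `G` is contained in
exactly one triangle of `𝒯`.  Suppose `m : 𝒯 → V(G)` picks a vertex ("marked angle")
`m T ∈ T` of each triangle `T ∈ 𝒯` in such a way that every vertex `v` lies in at most two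
triangles of `𝒯` whose marked angle is not `v`.  Then `col_ve(G) ≤ 4`. -/
theorem colVE_le_four_of_angle_marking {V : Type*} (G : SimpleGraph V)
    (𝒯 : Set (Finset V))
    (htri : ∀ T ∈ 𝒯, T.card = 3 ∧ ∀ x ∈ T, ∀ y ∈ T, x ≠ y → G.Adj x y)
    (hedge : ∀ e ∈ G.edgeSet, ∃! T, T ∈ 𝒯 ∧ ∀ x ∈ e, x ∈ T)
    (m : Finset V → V)
    (hm : ∀ T ∈ 𝒯, m T ∈ T)
    (hcount : ∀ v : V, {T | T ∈ 𝒯 ∧ v ∈ T ∧ m T ≠ v}.encard ≤ 2) :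
    colVE G ≤ 4 := by
  classical
  have key : ∀ s : ℕ, BobWins G s → s ≤ 3 := by
    intro s hs
    by_contra hs4
    push_neg at hs4
    obtain ⟨B, _hB1, hB2⟩ := hs
    have hV : Nonempty V := Sym2.ind (fun x _ => ⟨x⟩) (B [])
    choose pick hpick1 hpick2 using master hV htri hedge hm
    let step : List V → V := fun l =>
      pick {x | x ∈ l} {e | ∃ i, i + 1 < l.length ∧ B (l.take (i + 1)) = e} (B l)
    let a : ℕ → V := seqOfStep step
    let b : ℕ → Sym2 V := fun r => B (List.ofFn fun i : Fin (r + 1) => a i)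
    have hcons : ConsistentB B a b := fun r => rfl
    have haKey : ∀ k, a (k + 1) = pick (mVerts a (k + 1)) (mEdges b k) (b k) := by
      intro k
      have h1 : a (k + 1) = step (List.ofFn fun i : Fin (k + 1) => a i) :=
        seqOfStep_eq step (k + 1)
      rw [h1]
      show pick {x | x ∈ (List.ofFn fun i : Fin (k + 1) => a i)}
          {e | ∃ i, i + 1 < (List.ofFn fun i : Fin (k + 1) => a i).length ∧
            B ((List.ofFn fun i : Fin (k + 1) => a i).take (i + 1)) = e}
          (B (List.ofFn fun i : Fin (k + 1) => a i)) = _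
      have hM : {x | x ∈ (List.ofFn fun i : Fin (k + 1) => a i)} = mVerts a (k + 1) := by
        ext x
        simp only [Set.mem_setOf_eq, List.mem_ofFn, mVerts]
        constructor
        · rintro ⟨i, rfl⟩; exact ⟨i, i.isLt, rfl⟩
        · rintro ⟨i, hi, rfl⟩; exact ⟨⟨i, hi⟩, rfl⟩
      have hF : {e | ∃ i, i + 1 < (List.ofFn fun i : Fin (k + 1) => a i).length ∧
            B ((List.ofFn fun i : Fin (k + 1) => a i).take (i + 1)) = e} = mEdges b k := by
        ext e
        simp only [Set.mem_setOf_eq, List.length_ofFn, mEdges]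
        constructor
        · rintro ⟨i, hi, rfl⟩
          refine ⟨i, by omega, ?_⟩
          rw [take_ofFn_seq a (by omega : i + 1 ≤ k + 1)]
        · rintro ⟨i, hi, rfl⟩
          exact ⟨i, by omega, by rw [take_ofFn_seq a (by omega : i + 1 ≤ k + 1)]⟩
      rw [hM, hF]
    have hMins : ∀ k, mVerts a (k + 2) = insert (a (k + 1)) (mVerts a (k + 1)) := by
      intro k
      ext x
      simp only [mVerts, Set.mem_setOf_eq, Set.mem_insert_iff]
      constructor
      · rintro ⟨i, hi, rfl⟩
        rcases Nat.lt_succ_iff_lt_or_eq.mp hi with h | h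
        · exact Or.inr ⟨i, h, rfl⟩
        · subst h; exact Or.inl rfl
      · rintro (rfl | ⟨i, hi, rfl⟩)
        · exact ⟨k + 1, by omega, rfl⟩
        · exact ⟨i, by omega, rfl⟩
    have hEins : ∀ k, mEdges b (k + 1) = insert (b k) (mEdges b k) := by
      intro k
      ext e
      simp only [mEdges, Set.mem_setOf_eq, Set.mem_insert_iff]
      constructor
      · rintro ⟨i, hi, rfl⟩
        rcases Nat.lt_succ_iff_lt_or_eq.mp hi with h | h
        · exact Or.inr ⟨i, h, rfl⟩
        · subst h; exact Or.inl rfl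
      · rintro (rfl | ⟨i, hi, rfl⟩)
        · exact ⟨k, by omega, rfl⟩
        · exact ⟨i, by omega, rfl⟩
    have hinv : ∀ r, Good G 𝒯 m (mVerts a (r + 1)) (mEdges b r) := by
      intro r
      induction r with
      | zero =>
        have h0 : mEdges b 0 = (∅ : Set (Sym2 V)) := by
          ext e; simp [mEdges]
        rw [h0]
        exact ⟨fun T _ e he => absurd he (Set.notMem_empty e),
          fun v _ T _ _ _ y₁ _ _ hF => absurd hF (Set.notMem_empty _),
          fun T _ p _ q _ s' _ _ _ _ _ hF => absurd hF (Set.notMem_empty _)⟩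
      | succ k ih =>
        rw [hMins k, hEins k, haKey k]
        exact hpick2 _ _ _ ih
    have hAL : AliceLegal a := by
      intro r hex
      cases r with
      | zero =>
        intro hmem
        obtain ⟨i, hi, _⟩ := hmem
        omega
      | succ k =>
        rw [haKey k]
        exact hpick1 _ _ _ hex
    obtain ⟨r, v, hscore⟩ := hB2 a b hcons hAL
    unfold score at hscore
    by_cases hvM : v ∈ mVerts a (r + 1)
    · rw [if_pos hvM] at hscore
      have hs0 : s ≤ 0 := by exact_mod_cast hscore
      omega
    · rw [if_neg hvM] at hscore
      have h2 := score_bound hedge hcount (hinv r) hvM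
      have hsub : {e | e ∈ G.edgeSet ∧ v ∈ e ∧ e ∈ mEdges b (r + 1)} ⊆
          insert (b r) {e | e ∈ G.edgeSet ∧ v ∈ e ∧ e ∈ mEdges b r} := by
        rintro e ⟨he1, he2, he3⟩
        obtain ⟨i, hi, rfl⟩ := he3
        rcases Nat.lt_succ_iff_lt_or_eq.mp hi with h | h
        · exact Set.mem_insert_of_mem _ ⟨he1, he2, i, h, rfl⟩
        · subst h; exact Set.mem_insert _ _
      have h3 : Set.encard {e | e ∈ G.edgeSet ∧ v ∈ e ∧ e ∈ mEdges b (r + 1)} ≤ 3 := by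
        refine le_trans (Set.encard_mono hsub) (le_trans (Set.encard_insert_le _ _) ?_)
        calc Set.encard {e | e ∈ G.edgeSet ∧ v ∈ e ∧ e ∈ mEdges b r} + 1 ≤ 2 + 1 :=
              add_le_add_left h2 1
          _ = 3 := by norm_num
      have h4 : (s : ℕ∞) ≤ 3 := hscore.trans h3
      have h5 : s ≤ 3 := by exact_mod_cast h4
      omega
  show (⨆ s ∈ {s : ℕ | BobWins G s}, (s : ℕ∞)) + 1 ≤ 4
  have h1 : (⨆ s ∈ {s : ℕ | BobWins G s}, (s : ℕ∞)) ≤ 3 := by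
    refine iSup₂_le ?_
    intro s hs
    exact_mod_cast key s hs
  calc (⨆ s ∈ {s : ℕ | BobWins G s}, (s : ℕ∞)) + 1 ≤ 3 + 1 := add_le_add_left h1 1
    _ = 4 := by norm_num
end

section
/- Let n ∈ ℕ, let G′ = (V′,E′) be a simple graph, let V ⊆ V′, and let G be the subgraph of G′ induced on V. Suppose that (i) every vertex of V′ ∖ V has degree strictly less than n in G′; (ii) col_ve(G) = n; and (iii) Alice has a strategy in the vertex-edge marking game on G such that, in every play in which she follows it, at the end of each of her turns every unmarked vertex of G is incident to at most n−2 marked edges. Then col_ve(G′) = n. -/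
open VEGame

/-- Alice has a strategy in the vertex-edge marking game on `G` such that, in every play
in which she follows it, at the end of each of her turns every unmarked vertex of `G` is
incident to at most `n - 2` marked edges. -/
def AliceKeepsBelow {V : Type*} (G : SimpleGraph V) (n : ℕ) : Prop :=
  ∃ A : List (Sym2 V) → V,
    (∀ a b, ConsistentA A a b → BobLegal G b → AliceLegal a) ∧
    (∀ a b, ConsistentA A a b → BobLegal G b → ∀ (r : ℕ) (v : V),
      v ∉ mVerts a (r + 1) →
      {e | e ∈ G.edgeSet ∧ v ∈ e ∧ e ∈ mEdges b r}.encard ≤ ((n - 2 : ℕ) : ℕ∞))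


namespace Aux
open scoped Classical
open VEGame

variable {V' : Type*} (G' : SimpleGraph V') (V : Set V')

/-! ### generic list/ENat helpers -/

theorem take_ofFn' {α : Type*} (a : ℕ → α) {m n : ℕ} (h : m ≤ n) :
    (List.ofFn fun i : Fin n => a i).take m = List.ofFn fun i : Fin m => a i := by
  apply List.ext_getElem <;> simp [h]

theorem ofFn_succ_concat {α : Type*} (a : ℕ → α) (n : ℕ) :
    (List.ofFn fun i : Fin (n+1) => a i) = (List.ofFn fun i : Fin n => a i) ++ [a n] := by
  rw [List.ofFn_succ']
  simp [List.concat_eq_append]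

theorem dropLast_ofFn_succ {α : Type*} (a : ℕ → α) (n : ℕ) :
    (List.ofFn fun i : Fin (n+1) => a i).dropLast = List.ofFn fun i : Fin n => a i := by
  rw [ofFn_succ_concat]; simp

theorem mem_ofFn'' {α : Type*} (a : ℕ → α) (n : ℕ) (x : α) :
    x ∈ (List.ofFn fun i : Fin n => a i) ↔ ∃ i < n, a i = x := by
  simp only [List.mem_ofFn, Set.mem_range]
  constructor
  · rintro ⟨i, rfl⟩; exact ⟨i, i.2, rfl⟩
  · rintro ⟨i, hi, rfl⟩; exact ⟨⟨i, hi⟩, rfl⟩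

theorem enat_le_pred {a : ℕ∞} {n : ℕ} (hn : 1 ≤ n) (h : a < (n : ℕ∞)) : a ≤ ((n - 1 : ℕ) : ℕ∞) := by
  have ha : a ≠ ⊤ := h.ne_top
  lift a to ℕ using ha
  rw [Nat.cast_lt] at h
  rw [Nat.cast_le]
  omega

theorem enat_add_one {n : ℕ} (hn : 1 ≤ n) : ((n - 1 : ℕ) : ℕ∞) + 1 = (n : ℕ∞) := by
  rw [show (1 : ℕ∞) = ((1:ℕ) : ℕ∞) from rfl, ← Nat.cast_add]
  congr 1
  omega

theorem enat_succ_ne_zero (a : ℕ∞) : a + 1 ≠ 0 := by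
  intro h
  have h1 : (1 : ℕ∞) ≤ a + 1 := le_add_self
  rw [h] at h1
  simp at h1

theorem enat_add_one_cancel {a b : ℕ∞} (h : a + 1 = b + 1) : a = b :=
  WithTop.add_right_cancel WithTop.one_ne_top h

/-! ### the embedding of `Sym2 ↥V` into `Sym2 V'` -/

noncomputable abbrev emb (V : Set V') : Sym2 (↥V) → Sym2 V' := Sym2.map Subtype.val

theorem emb_inj : Function.Injective (emb V) := Sym2.map.injective Subtype.val_injective

theorem mem_emb {v : ↥V} {e : Sym2 ↥V} : (v : V') ∈ emb V e ↔ v ∈ e := by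
  constructor
  · intro h
    obtain ⟨u, hu, hv⟩ := Sym2.mem_map.mp h
    rwa [show u = v from Subtype.val_injective hv] at hu
  · intro h; exact Sym2.mem_map.mpr ⟨v, h, rfl⟩

theorem emb_edge {e : Sym2 ↥V} : emb V e ∈ G'.edgeSet ↔ e ∈ (G'.induce V).edgeSet := by
  induction e using Sym2.ind with
  | _ u v => simp [SimpleGraph.mem_edgeSet, emb, SimpleGraph.comap]

theorem eq_emb_of_both_mem {e : Sym2 V'} (h : ∀ x ∈ e, x ∈ V) :
    ∃ e' : Sym2 ↥V, emb V e' = e := by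
  induction e using Sym2.ind with
  | _ u v =>
    exact ⟨s(⟨u, h u (by simp)⟩, ⟨v, h v (by simp)⟩), rfl⟩

theorem mem_of_mem_emb {x : V'} {e : Sym2 ↥V} (h : x ∈ emb V e) : x ∈ V := by
  obtain ⟨u, _, rfl⟩ := Sym2.mem_map.mp h
  exact u.2

open Classical in
theorem incident_le_neighbors {G' : SimpleGraph V'} (v : V') (S : Set (Sym2 V')) :
    {e | e ∈ G'.edgeSet ∧ v ∈ e ∧ e ∈ S}.encard ≤ (G'.neighborSet v).encard := by
  classical
  set f : Sym2 V' → V' := fun e => if h : ∃ u, e = s(v, u) then h.choose else v with hf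
  have key : ∀ e ∈ {e | e ∈ G'.edgeSet ∧ v ∈ e ∧ e ∈ S}, e = s(v, f e) ∧ f e ∈ G'.neighborSet v := by
    rintro e ⟨he, hv, -⟩
    have h : ∃ u, e = s(v, u) := Sym2.mem_iff_exists.mp hv
    have : f e = h.choose := by simp [hf, h]
    rw [this]
    have hspec := h.choose_spec
    refine ⟨hspec, ?_⟩
    rw [SimpleGraph.mem_neighborSet, ← SimpleGraph.mem_edgeSet, ← hspec]
    exact he
  apply Set.encard_le_encard_of_injOn (f := f)
  · intro e he; exact (key e he).2
  · intro e1 h1 e2 h2 heq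
    rw [(key e1 h1).1, (key e2 h2).1, heq]

/-! ### the virtual Bob move list extracted from a list of real moves -/

noncomputable def vBstep (acc : List (Sym2 ↥V)) (e : Sym2 V') : List (Sym2 ↥V) :=
  if h : ∃ e', e' ∈ (G'.induce V).edgeSet ∧ emb V e' = e ∧ e' ∉ acc then acc ++ [h.choose] else acc

noncomputable def vBlist (es : List (Sym2 V')) : List (Sym2 ↥V) := es.foldl (vBstep G' V) []

theorem mem_vBstep (acc : List (Sym2 ↥V)) (e : Sym2 V') (e' : Sym2 ↥V) :
    e' ∈ vBstep G' V acc e ↔ e' ∈ acc ∨ (e' ∈ (G'.induce V).edgeSet ∧ emb V e' = e) := by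
  unfold vBstep
  split
  case isTrue h =>
    simp only [List.mem_append, List.mem_singleton]
    constructor
    · rintro (h1 | rfl)
      · exact Or.inl h1
      · exact Or.inr ⟨h.choose_spec.1, h.choose_spec.2.1⟩
    · rintro (h1 | ⟨h1, h2⟩)
      · exact Or.inl h1
      · by_cases hacc : e' ∈ acc
        · exact Or.inl hacc
        · right
          have := h.choose_spec
          exact (emb_inj (V := V) (this.2.1.trans h2.symm)).symm
  case isFalse h =>
    constructor
    · exact Or.inl
    · rintro (h1 | ⟨h1, h2⟩)
      · exact h1
      · by_cases hacc : e' ∈ acc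
        · exact hacc
        · exact absurd ⟨e', h1, h2, hacc⟩ h

theorem mem_foldl_vBstep (es : List (Sym2 V')) (acc : List (Sym2 ↥V)) (e' : Sym2 ↥V) :
    e' ∈ es.foldl (vBstep G' V) acc ↔
      e' ∈ acc ∨ (e' ∈ (G'.induce V).edgeSet ∧ emb V e' ∈ es) := by
  induction es generalizing acc with
  | nil => simp
  | cons a es ih =>
    rw [List.foldl_cons, ih, mem_vBstep]
    simp only [List.mem_cons]
    tauto

theorem mem_vBlist (es : List (Sym2 V')) (e' : Sym2 ↥V) :
    e' ∈ vBlist G' V es ↔ e' ∈ (G'.induce V).edgeSet ∧ emb V e' ∈ es := by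
  rw [vBlist, mem_foldl_vBstep]; simp

theorem nodup_foldl_vBstep (es : List (Sym2 V')) (acc : List (Sym2 ↥V)) (h : acc.Nodup) :
    (es.foldl (vBstep G' V) acc).Nodup := by
  induction es generalizing acc with
  | nil => exact h
  | cons a es ih =>
    rw [List.foldl_cons]
    apply ih
    unfold vBstep
    split
    case isTrue h2 =>
      rw [List.nodup_append]
      exact ⟨h, List.nodup_singleton _, fun x hx y hy hxy => h2.choose_spec.2.2 (by rw [List.mem_singleton] at hy; rw [← hy, ← hxy]; exact hx)⟩
    case isFalse => exact h

theorem nodup_vBlist (es : List (Sym2 V')) : (vBlist G' V es).Nodup :=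
  nodup_foldl_vBstep G' V es [] List.nodup_nil

theorem prefix_vBstep (acc : List (Sym2 ↥V)) (e : Sym2 V') : acc <+: vBstep G' V acc e := by
  unfold vBstep; split
  · exact ⟨_, rfl⟩
  · exact List.prefix_refl _

theorem vBlist_append (es : List (Sym2 V')) (e : Sym2 V') :
    vBlist G' V (es ++ [e]) = vBstep G' V (vBlist G' V es) e := by
  rw [vBlist, List.foldl_append]; rfl

theorem vBlist_prefix_append (es : List (Sym2 V')) (e : Sym2 V') :
    vBlist G' V es <+: vBlist G' V (es ++ [e]) := by
  rw [vBlist_append]; exact prefix_vBstep G' V _ _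

theorem vBstep_eq_of_ne (acc : List (Sym2 ↥V)) (e : Sym2 V') (h : vBstep G' V acc e ≠ acc) :
    ∃ e', e' ∈ (G'.induce V).edgeSet ∧ emb V e' = e ∧ e' ∉ acc ∧ vBstep G' V acc e = acc ++ [e'] := by
  unfold vBstep at *
  split at h
  case isTrue h2 => exact ⟨h2.choose, h2.choose_spec.1, h2.choose_spec.2.1, h2.choose_spec.2.2, by rw [dif_pos h2]⟩
  case isFalse => exact absurd rfl h


/-! ### basic facts about `mVerts` and `mEdges` -/

theorem mem_mEdges_succ {W : Type*} (b : ℕ → Sym2 W) (t : ℕ) (e : Sym2 W) :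
    e ∈ mEdges b (t+1) ↔ e ∈ mEdges b t ∨ b t = e := by
  simp only [mEdges, Set.mem_setOf_eq]
  constructor
  · rintro ⟨i, hi, rfl⟩
    rcases Nat.lt_succ_iff_lt_or_eq.mp hi with h | rfl
    · exact Or.inl ⟨i, h, rfl⟩
    · exact Or.inr rfl
  · rintro (⟨i, hi, rfl⟩ | rfl)
    · exact ⟨i, hi.trans (Nat.lt_succ_self t), rfl⟩
    · exact ⟨t, Nat.lt_succ_self t, rfl⟩

theorem mem_mVerts_succ {W : Type*} (a : ℕ → W) (t : ℕ) (v : W) :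
    v ∈ mVerts a (t+1) ↔ v ∈ mVerts a t ∨ a t = v := by
  simp only [mVerts, Set.mem_setOf_eq]
  constructor
  · rintro ⟨i, hi, rfl⟩
    rcases Nat.lt_succ_iff_lt_or_eq.mp hi with h | rfl
    · exact Or.inl ⟨i, h, rfl⟩
    · exact Or.inr rfl
  · rintro (⟨i, hi, rfl⟩ | rfl)
    · exact ⟨i, hi.trans (Nat.lt_succ_self t), rfl⟩
    · exact ⟨t, Nat.lt_succ_self t, rfl⟩

theorem mVerts_mono {W : Type*} (a : ℕ → W) {s t : ℕ} (h : s ≤ t) :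
    mVerts a s ⊆ mVerts a t := by
  rintro v ⟨i, hi, rfl⟩; exact ⟨i, hi.trans_le h, rfl⟩

theorem mEdges_mono {W : Type*} (b : ℕ → Sym2 W) {s t : ℕ} (h : s ≤ t) :
    mEdges b s ⊆ mEdges b t := by
  rintro v ⟨i, hi, rfl⟩; exact ⟨i, hi.trans_le h, rfl⟩

theorem mem_mVerts_ofFn {W : Type*} (a : ℕ → W) (r : ℕ) (v : W) :
    v ∈ mVerts a r ↔ v ∈ (List.ofFn fun i : Fin r => a i) := by
  rw [mem_ofFn'']; rfl

/-! ### the virtual Alice moves (for Bob's lifted strategy) -/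

section LemB

variable [Nonempty ↥V]

noncomputable def nextv (vs : List ↥V) (x : V') : ↥V :=
  if h : ∃ hx : x ∈ V, (⟨x, hx⟩ : ↥V) ∉ vs then ⟨x, h.choose⟩
  else if h2 : ∃ w : ↥V, w ∉ vs then h2.choose
  else Classical.arbitrary ↥V

noncomputable def virtA (xs : List V') : List ↥V :=
  xs.foldl (fun vs x => vs ++ [nextv V vs x]) []

theorem virtA_append (xs : List V') (x : V') :
    virtA V (xs ++ [x]) = virtA V xs ++ [nextv V (virtA V xs) x] := by
  rw [virtA, List.foldl_append]; rfl

theorem nextv_fresh (vs : List ↥V) (x : V') (h : ∃ w : ↥V, w ∉ vs) :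
    nextv V vs x ∉ vs := by
  by_cases h1 : ∃ hx : x ∈ V, (⟨x, hx⟩ : ↥V) ∉ vs
  · rw [nextv, dif_pos h1]
    exact h1.choose_spec
  · rw [nextv, dif_neg h1, dif_pos h]
    exact h.choose_spec

theorem nextv_covers (vs : List ↥V) (x : V') (hx : x ∈ V) :
    (⟨x, hx⟩ : ↥V) ∈ vs ∨ nextv V vs x = ⟨x, hx⟩ := by
  unfold nextv
  by_cases h : ∃ hx : x ∈ V, (⟨x, hx⟩ : ↥V) ∉ vs
  · right; rw [dif_pos h]
  · left
    by_contra hmem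
    exact h ⟨hx, hmem⟩

/-- The virtual Alice sequence induced by a real Alice sequence. -/
noncomputable def vaSeq (a : ℕ → V') : ℕ → ↥V :=
  fun r => nextv V (virtA V (List.ofFn fun i : Fin r => a i)) (a r)

theorem virtA_ofFn (a : ℕ → V') (r : ℕ) :
    virtA V (List.ofFn fun i : Fin r => a i) = List.ofFn fun i : Fin r => vaSeq V a i := by
  induction r with
  | zero => rfl
  | succ r ih =>
    rw [ofFn_succ_concat a r, virtA_append, ih, ofFn_succ_concat (vaSeq V a) r, vaSeq, ih]

/-! ### Bob's lifted strategy -/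

variable (B : List ↥V → Sym2 ↥V)

noncomputable def Bstrat : List V' → Sym2 V' := fun xs =>
  if (emb V (B (virtA V xs)) ∈ G'.edgeSet ∧
      emb V (B (virtA V xs)) ∉ (List.range (xs.length - 1)).attach.map
        (fun i => Bstrat (xs.take (i.1 + 1))))
  then emb V (B (virtA V xs))
  else if h : ∃ e, e ∈ G'.edgeSet ∧ e ∉ (List.range (xs.length - 1)).attach.map
        (fun i => Bstrat (xs.take (i.1 + 1)))
  then h.choose else emb V (B (virtA V xs))
termination_by xs => xs.length
decreasing_by
  all_goals
    have hi := i.2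
    simp only [List.mem_range] at hi
    simp only [List.length_take]
    omega

variable {G' V B}

theorem Bstrat_spec {a : ℕ → V'} {b : ℕ → Sym2 V'}
    (hcons : ConsistentB (Bstrat G' V B) a b) (r : ℕ) :
    (b r = emb V (B (virtA V (List.ofFn fun i : Fin (r+1) => a i))) ∧
       emb V (B (virtA V (List.ofFn fun i : Fin (r+1) => a i))) ∈ G'.edgeSet ∧
       emb V (B (virtA V (List.ofFn fun i : Fin (r+1) => a i))) ∉ mEdges b r)
    ∨ (¬(emb V (B (virtA V (List.ofFn fun i : Fin (r+1) => a i))) ∈ G'.edgeSet ∧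
          emb V (B (virtA V (List.ofFn fun i : Fin (r+1) => a i))) ∉ mEdges b r) ∧
       b r ∈ G'.edgeSet ∧ b r ∉ mEdges b r)
    ∨ (¬(∃ e ∈ G'.edgeSet, e ∉ mEdges b r) ∧
       b r = emb V (B (virtA V (List.ofFn fun i : Fin (r+1) => a i)))) := by
  have hb := hcons r
  rw [Bstrat] at hb
  have hlen : (List.ofFn fun i : Fin (r+1) => a i).length - 1 = r := by simp
  have hprev : ∀ e : Sym2 V',
      (e ∈ (List.range ((List.ofFn fun i : Fin (r+1) => a i).length - 1)).attach.map
        (fun i => Bstrat G' V B ((List.ofFn fun i : Fin (r+1) => a i).take (i.1 + 1))))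
      ↔ e ∈ mEdges b r := by
    intro e
    simp only [List.mem_map, List.mem_attach, true_and, Subtype.exists, List.mem_range, hlen]
    constructor
    · rintro ⟨i, hi, rfl⟩
      rw [take_ofFn' a (by omega : i + 1 ≤ r + 1), ← hcons i]
      exact ⟨i, hi, rfl⟩
    · rintro ⟨i, hi, rfl⟩
      refine ⟨i, hi, ?_⟩
      rw [take_ofFn' a (by omega : i + 1 ≤ r + 1), ← hcons i]
  split at hb
  case isTrue h =>
    exact Or.inl ⟨hb, h.1, (hprev _).mpr.mt h.2⟩
  case isFalse h =>
    rw [not_and_or] at h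
    split at hb
    case isTrue h2 =>
      right; left
      have hspec := h2.choose_spec
      rw [hb]
      refine ⟨?_, hspec.1, (hprev _).not.mp hspec.2⟩
      rcases h with h | h
      · exact fun hc => h hc.1
      · intro hc
        exact hc.2 ((hprev _).mp (not_not.mp h))
    case isFalse h2 =>
      right; right
      refine ⟨?_, hb⟩
      rintro ⟨e, he, hfresh⟩
      exact h2 ⟨e, he, (hprev e).not.mpr hfresh⟩

/-- Lemma B: Bob lifts a winning strategy from the induced subgraph. -/
theorem bobWins_lift {n : ℕ} (hn : 2 ≤ n)
    (hG : BobWins (G'.induce V) (n - 1)) : BobWins G' (n - 1) := by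
  obtain ⟨B, hBleg, hBwin⟩ := hG
  refine ⟨Bstrat G' V B, ?_, ?_⟩
  · -- legality
    intro a b hcons _ r hex
    rcases Bstrat_spec hcons r with ⟨hb, he, hf⟩ | ⟨_, he, hf⟩ | ⟨hnone, _⟩
    · rw [hb]; exact ⟨he, hf⟩
    · exact ⟨he, hf⟩
    · exact absurd hex hnone
  · -- forcing
    intro a b hcons haleg
    set va : ℕ → ↥V := vaSeq V a with hva
    set vb : ℕ → Sym2 ↥V := fun r => B (List.ofFn fun i : Fin (r+1) => va i) with hvb
    have hconsB : ConsistentB B va vb := fun r => rfl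
    have hcand : ∀ t, emb V (B (virtA V (List.ofFn fun i : Fin (t+1) => a i))) = emb V (vb t) := by
      intro t
      rw [virtA_ofFn]
    have hvaleg : AliceLegal va := by
      intro j hex
      obtain ⟨w, hw⟩ := hex
      have hmem : ∀ u : ↥V, u ∈ mVerts va j ↔ u ∈ virtA V (List.ofFn fun i : Fin j => a i) := by
        intro u
        rw [virtA_ofFn, ← mem_mVerts_ofFn]
      rw [hmem]
      exact nextv_fresh V _ (a j) ⟨w, (hmem w).not.mp hw⟩
    have hvbleg : BobLegal (G'.induce V) vb := hBleg va vb hconsB hvaleg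
    -- the key invariant Q
    have Q : ∀ t, ∀ e' ∈ (G'.induce V).edgeSet, (emb V e' ∈ mEdges b t ↔ e' ∈ mEdges vb t) := by
      intro t
      induction t with
      | zero => intro e' _; simp [mEdges]
      | succ t ih =>
        intro e' he'
        rcases Bstrat_spec hcons t with ⟨hb, _, _⟩ | ⟨hnot, hbe, hbf⟩ | ⟨_, hb⟩
        · rw [hcand] at hb
          rw [mem_mEdges_succ, mem_mEdges_succ, ih e' he']
          constructor
          · rintro (h | h)
            · exact Or.inl h
            · exact Or.inr (emb_inj (V := V) (hb.symm.trans h))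
          · rintro (h | h)
            · exact Or.inl h
            · exact Or.inr (by rw [hb, h])
        · rw [hcand] at hnot
          -- all edges of the induced graph are already virtually marked
          have hall : ∀ f ∈ (G'.induce V).edgeSet, f ∈ mEdges vb t := by
            by_contra hc
            push_neg at hc
            obtain ⟨hvb_e, hvb_f⟩ := hvbleg t (by exact hc)
            apply hnot
            refine ⟨(emb_edge G' V).mpr hvb_e, ?_⟩
            rw [ih _ hvb_e]
            exact hvb_f
          have hstale : emb V e' ∈ mEdges b t := (ih e' he').mpr (hall e' he')
          rw [mem_mEdges_succ, mem_mEdges_succ]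
          constructor
          · intro _
            exact Or.inl (hall e' he')
          · intro _
            exact Or.inl hstale
        · rw [hcand] at hb
          rw [mem_mEdges_succ, mem_mEdges_succ, ih e' he']
          constructor
          · rintro (h | h)
            · exact Or.inl h
            · exact Or.inr (emb_inj (V := V) (hb.symm.trans h))
          · rintro (h | h)
            · exact Or.inl h
            · exact Or.inr (by rw [hb, h])
    obtain ⟨r, v, hscore⟩ := hBwin va vb hconsB hvaleg
    have hn1 : (1 : ℕ) ≤ n - 1 := by omega
    -- v is virtually unmarked
    have hvun : v ∉ mVerts va (r + 1) := by
      intro hmem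
      rw [score, if_pos hmem] at hscore
      have : ((n - 1 : ℕ) : ℕ∞) = 0 := le_antisymm hscore zero_le
      rw [Nat.cast_eq_zero] at this
      omega
    -- v is really unmarked
    have hrun : (v : V') ∉ mVerts a (r + 1) := by
      rintro ⟨i, hi, hai⟩
      apply hvun
      have hx : a i ∈ V := by rw [hai]; exact v.2
      have hxv : (⟨a i, hx⟩ : ↥V) = v := Subtype.ext hai
      rcases nextv_covers V (virtA V (List.ofFn fun j : Fin i => a j)) (a i) hx with h | h
      · rw [hxv] at h
        rw [virtA_ofFn, ← mem_mVerts_ofFn] at h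
        exact mVerts_mono va (by omega) h
      · have hv : va i = v := by
          rw [hva]
          unfold vaSeq
          rw [h, hxv]
        exact ⟨i, hi, hv⟩
    refine ⟨r, (v : V'), ?_⟩
    rw [score, if_neg hrun]
    rw [score, if_neg hvun] at hscore
    refine hscore.trans ?_
    rw [← Function.Injective.encard_image (emb_inj (V := V))]
    apply Set.encard_le_encard
    rintro e ⟨e', ⟨h1, h2, h3⟩, rfl⟩
    exact ⟨(emb_edge G' V).mpr h1, (mem_emb V).mpr h2, (Q (r+1) e' h1).mpr h3⟩
/-! ### generic: a strategy's previous moves -/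

theorem prev_mem {W : Type*} (S : List W → Sym2 W) {a : ℕ → W} {b : ℕ → Sym2 W}
    (hcons : ConsistentB S a b) (r : ℕ) (e : Sym2 W) :
    (e ∈ (List.range ((List.ofFn fun i : Fin (r+1) => a i).length - 1)).attach.map
      (fun i => S ((List.ofFn fun i : Fin (r+1) => a i).take (i.1 + 1)))) ↔ e ∈ mEdges b r := by
  have hlen : (List.ofFn fun i : Fin (r+1) => a i).length - 1 = r := by simp
  simp only [List.mem_map, List.mem_attach, true_and, Subtype.exists, List.mem_range, hlen]
  constructor
  · rintro ⟨i, hi, rfl⟩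
    rw [take_ofFn' a (by omega : i + 1 ≤ r + 1), ← hcons i]
    exact ⟨i, hi, rfl⟩
  · rintro ⟨i, hi, rfl⟩
    refine ⟨i, hi, ?_⟩
    rw [take_ofFn' a (by omega : i + 1 ≤ r + 1), ← hcons i]

/-! ### generic: constructing a play from an Alice rule and a Bob strategy -/

section Play

variable {W : Type*} (amove : List W → List (Sym2 W) → W) (B' : List W → Sym2 W)

noncomputable def hist : ℕ → List (W × Sym2 W)
  | 0 => []
  | (r+1) =>
      hist r ++ [(amove ((hist r).map Prod.fst) ((hist r).map Prod.snd),
        B' ((hist r).map Prod.fst ++ [amove ((hist r).map Prod.fst) ((hist r).map Prod.snd)]))]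

noncomputable def playA : ℕ → W :=
  fun r => amove ((hist amove B' r).map Prod.fst) ((hist amove B' r).map Prod.snd)

noncomputable def playB : ℕ → Sym2 W :=
  fun r => B' ((hist amove B' r).map Prod.fst ++ [playA amove B' r])

theorem hist_eq (r : ℕ) :
    hist amove B' r = List.ofFn (fun i : Fin r => (playA amove B' i, playB amove B' i)) := by
  induction r with
  | zero => rfl
  | succ r ih =>
    show hist amove B' r ++ [(playA amove B' r, playB amove B' r)] =
      List.ofFn fun i : Fin (r+1) => (playA amove B' i, playB amove B' i)
    rw [ih, ofFn_succ_concat (fun i => (playA amove B' i, playB amove B' i)) r]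

theorem map_fst_hist (r : ℕ) :
    (hist amove B' r).map Prod.fst = List.ofFn (fun i : Fin r => playA amove B' i) := by
  rw [hist_eq, List.map_ofFn]; rfl

theorem map_snd_hist (r : ℕ) :
    (hist amove B' r).map Prod.snd = List.ofFn (fun i : Fin r => playB amove B' i) := by
  rw [hist_eq, List.map_ofFn]; rfl

theorem playA_eq (r : ℕ) :
    playA amove B' r = amove (List.ofFn fun i : Fin r => playA amove B' i)
      (List.ofFn fun i : Fin r => playB amove B' i) := by
  rw [playA, map_fst_hist, map_snd_hist]

theorem consistentB_play : ConsistentB B' (playA amove B') (playB amove B') := by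
  intro r
  rw [playB, map_fst_hist, ofFn_succ_concat (playA amove B') r]

end Play
/-! ### a greedy Bob strategy: if the graph has an edge, Bob wins score 1 -/

noncomputable def greedyB {W : Type*} (H : SimpleGraph W) (d : Sym2 W) : List W → Sym2 W :=
  fun xs =>
    if h : ∃ e, e ∈ H.edgeSet ∧ (∃ x ∈ e, x ∉ xs) ∧
        e ∉ (List.range (xs.length - 1)).attach.map (fun i => greedyB H d (xs.take (i.1+1)))
    then h.choose
    else if h2 : ∃ e, e ∈ H.edgeSet ∧
        e ∉ (List.range (xs.length - 1)).attach.map (fun i => greedyB H d (xs.take (i.1+1)))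
    then h2.choose else d
termination_by xs => xs.length
decreasing_by
  all_goals
    have hi := i.2
    simp only [List.mem_range] at hi
    simp only [List.length_take]
    omega

theorem greedyB_spec {W : Type*} {H : SimpleGraph W} {d : Sym2 W} {a : ℕ → W} {b : ℕ → Sym2 W}
    (hcons : ConsistentB (greedyB H d) a b) (r : ℕ) :
    (b r ∈ H.edgeSet ∧ (∃ x ∈ b r, x ∉ mVerts a (r+1)) ∧ b r ∉ mEdges b r)
    ∨ (¬(∃ e ∈ H.edgeSet, (∃ x ∈ e, x ∉ mVerts a (r+1)) ∧ e ∉ mEdges b r) ∧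
        b r ∈ H.edgeSet ∧ b r ∉ mEdges b r)
    ∨ ¬(∃ e ∈ H.edgeSet, e ∉ mEdges b r) := by
  have hb := hcons r
  rw [greedyB] at hb
  have hprev := prev_mem (greedyB H d) hcons r
  have hxs : ∀ x : W, x ∈ (List.ofFn fun i : Fin (r+1) => a i) ↔ x ∈ mVerts a (r+1) := by
    intro x; rw [← mem_mVerts_ofFn]
  split at hb
  case isTrue h =>
    obtain ⟨he, ⟨x, hx1, hx2⟩, hf⟩ := h.choose_spec
    rw [hb]
    exact Or.inl ⟨he, ⟨x, hx1, fun hc => hx2 ((hxs x).mpr hc)⟩, (hprev _).mpr.mt hf⟩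
  case isFalse h =>
    split at hb
    case isTrue h2 =>
      obtain ⟨he, hf⟩ := h2.choose_spec
      rw [hb]
      refine Or.inr (Or.inl ⟨?_, he, (hprev _).mpr.mt hf⟩)
      rintro ⟨e, he2, ⟨x, hx1, hx2⟩, hf2⟩
      exact h ⟨e, he2, ⟨x, hx1, fun hc => hx2 ((hxs x).mp hc)⟩, (hprev e).not.mpr hf2⟩
    case isFalse h2 =>
      refine Or.inr (Or.inr ?_)
      rintro ⟨e, he, hf⟩
      exact h2 ⟨e, he, (hprev e).not.mpr hf⟩

theorem exists_fresh_endpoint {W : Type*} {H : SimpleGraph W} (hE : H.edgeSet.Nonempty)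
    (a : ℕ → W) : ∃ e ∈ H.edgeSet, ∃ x ∈ e, x ∉ mVerts a 1 := by
  obtain ⟨e, he⟩ := hE
  revert he
  induction e using Sym2.ind with
  | _ u w =>
    intro he
    have hne : u ≠ w := (H.mem_edgeSet.mp he).ne
    by_cases hu : u ∈ mVerts a 1
    · refine ⟨s(u,w), he, w, by simp, ?_⟩
      rintro ⟨i, hi, haw⟩
      obtain ⟨j, hj, hau⟩ := hu
      have hi0 : i = 0 := by omega
      have hj0 : j = 0 := by omega
      subst hi0; subst hj0
      exact hne (hau.symm.trans haw)
    · exact ⟨s(u,w), he, u, by simp, hu⟩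

theorem bobWins_one {W : Type*} (H : SimpleGraph W) (hE : H.edgeSet.Nonempty) : BobWins H 1 := by
  classical
  refine ⟨greedyB H hE.some, ?_, ?_⟩
  · intro a b hcons _ r hex
    rcases greedyB_spec hcons r with ⟨h1, _, h3⟩ | ⟨_, h1, h3⟩ | h
    · exact ⟨h1, h3⟩
    · exact ⟨h1, h3⟩
    · exact absurd hex h
  · intro a b hcons haleg
    have hfresh0 : ∀ e : Sym2 W, e ∉ mEdges b 0 := by rintro e ⟨i, hi, _⟩; omega
    rcases greedyB_spec hcons 0 with ⟨h1, ⟨x, hx1, hx2⟩, _⟩ | ⟨h, _, _⟩ | h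
    · refine ⟨0, x, ?_⟩
      rw [score, if_neg hx2, show ((1:ℕ) : ℕ∞) = 1 from rfl, Set.one_le_encard_iff_nonempty]
      exact ⟨b 0, h1, hx1, 0, Nat.lt_succ_self 0, rfl⟩
    · obtain ⟨e, he, x, hx1, hx2⟩ := exists_fresh_endpoint hE a
      exact absurd ⟨e, he, ⟨x, hx1, hx2⟩, hfresh0 e⟩ h
    · obtain ⟨e, he⟩ := hE
      exact absurd ⟨e, he, hfresh0 e⟩ h
/-! ### facts about `colVE` -/

theorem colVE_eq_add_one {W : Type*} (H : SimpleGraph W) {m : ℕ}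
    (hup : ∀ s, BobWins H s → s ≤ m) (hlow : BobWins H m) : colVE H = (m : ℕ∞) + 1 := by
  rw [colVE]
  congr 1
  apply le_antisymm
  · exact iSup₂_le fun s hs => Nat.cast_le.mpr (hup s hs)
  · exact le_iSup₂ (f := fun (s : ℕ) (_ : s ∈ {s : ℕ | BobWins H s}) => (s : ℕ∞)) m hlow

theorem colVE_eq_one {W : Type*} (H : SimpleGraph W)
    (hup : ∀ s, BobWins H s → s = 0) : colVE H = 1 := by
  rw [colVE]
  have h0 : (⨆ s ∈ {s : ℕ | BobWins H s}, (s : ℕ∞)) = 0 := by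
    apply le_antisymm ?_ zero_le
    exact iSup₂_le fun s hs => by rw [hup s hs]; exact le_refl _
  rw [h0, zero_add]

theorem bobWins_of_colVE {W : Type*} {H : SimpleGraph W} {n : ℕ} (hn : 2 ≤ n)
    (hcol : colVE H = (n : ℕ∞)) : BobWins H (n - 1) := by
  rw [colVE] at hcol
  have hsup : (⨆ s ∈ {s : ℕ | BobWins H s}, (s : ℕ∞)) = ((n - 1 : ℕ) : ℕ∞) := by
    apply enat_add_one_cancel
    rw [hcol, enat_add_one (by omega : 1 ≤ n)]
  by_contra hnb
  have hle : ∀ s, BobWins H s → s ≤ n - 2 := by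
    intro s hs
    have h1 : (s : ℕ∞) ≤ ((n - 1 : ℕ) : ℕ∞) := by
      rw [← hsup]
      exact le_iSup₂ (f := fun (s : ℕ) (_ : s ∈ {s : ℕ | BobWins H s}) => (s : ℕ∞)) s hs
    rw [Nat.cast_le] at h1
    rcases Nat.lt_or_ge s (n - 1) with h | h
    · omega
    · exact absurd (by rwa [le_antisymm h1 h] at hs) hnb
  have h2 : (⨆ s ∈ {s : ℕ | BobWins H s}, (s : ℕ∞)) ≤ ((n - 2 : ℕ) : ℕ∞) :=
    iSup₂_le fun s hs => Nat.cast_le.mpr (hle s hs)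
  rw [hsup, Nat.cast_le] at h2
  omega

theorem edgeSet_empty_of_colVE_one {W : Type*} (H : SimpleGraph W)
    (h : colVE H = 1) : H.edgeSet = ∅ := by
  by_contra hne
  have hE : H.edgeSet.Nonempty := Set.nonempty_iff_ne_empty.mpr hne
  have h1 : (1 : ℕ∞) ≤ ⨆ s ∈ {s : ℕ | BobWins H s}, (s : ℕ∞) := by
    have := le_iSup₂ (f := fun (s : ℕ) (_ : s ∈ {s : ℕ | BobWins H s}) => (s : ℕ∞)) 1
      (bobWins_one H hE)
    simpa using this
  rw [colVE] at h
  have h2 : (2 : ℕ∞) ≤ 1 := by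
    calc (2 : ℕ∞) = 1 + 1 := by norm_num
    _ ≤ (⨆ s ∈ {s : ℕ | BobWins H s}, (s : ℕ∞)) + 1 := by exact add_le_add_left h1 1
    _ = 1 := h
  norm_num at h2

/-! ### greedy Alice (used to realize at least one legal play) -/

noncomputable def greedyA (W : Type*) [Nonempty W] : List W → List (Sym2 W) → W :=
  fun as _ => if h : ∃ x : W, x ∉ as then h.choose else Classical.arbitrary W

theorem greedyA_legal {W : Type*} [Nonempty W] (B' : List W → Sym2 W) :
    AliceLegal (playA (greedyA W) B') := by
  intro r hex
  obtain ⟨x, hx⟩ := hex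
  rw [playA_eq, greedyA]
  have hcond : ∃ y : W, y ∉ (List.ofFn fun i : Fin r => playA (greedyA W) B' i) := by
    refine ⟨x, ?_⟩
    rw [← mem_mVerts_ofFn]
    exact hx
  rw [dif_pos hcond, mem_mVerts_ofFn]
  exact hcond.choose_spec

end LemB

end Aux


namespace Aux
open scoped Classical
open VEGame

section LemA

variable {V' : Type*} (G' : SimpleGraph V') (V : Set V') [Nonempty ↥V]

/-- The infinite virtual Bob sequence: the entries of the increasing list chain `L`,
followed by a greedy legal continuation. -/
noncomputable def vbf (L : ℕ → List (Sym2 ↥V)) : ℕ → Sym2 ↥V := fun j =>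
  if h : ∃ r, j < (L r).length then (L h.choose).get ⟨j, h.choose_spec⟩
  else if h2 : ∃ e, e ∈ (G'.induce V).edgeSet ∧
      e ∉ (List.range j).attach.map (fun i => vbf L i.1)
    then h2.choose
  else s(Classical.arbitrary ↥V, Classical.arbitrary ↥V)
termination_by j => j
decreasing_by
  all_goals
    have hi := i.2
    simp only [List.mem_range] at hi
    omega

variable {G' V}

section vbfFacts

variable {L : ℕ → List (Sym2 ↥V)} (hL : ∀ r1 r2, r1 ≤ r2 → L r1 <+: L r2)

include hL

theorem vbf_get (r j : ℕ) (h : j < (L r).length) : vbf G' V L j = (L r).get ⟨j, h⟩ := by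
  have hex : ∃ r, j < (L r).length := ⟨r, h⟩
  rw [vbf, dif_pos hex]
  simp only [List.get_eq_getElem]
  rcases le_total hex.choose r with hc | hc
  · exact List.IsPrefix.getElem (hL _ _ hc) hex.choose_spec
  · exact (List.IsPrefix.getElem (hL _ _ hc) h).symm

theorem L_eq_ofFn (r : ℕ) :
    L r = List.ofFn (fun i : Fin (L r).length => vbf G' V L i) := by
  apply List.ext_getElem
  · simp
  · intro j h1 h2
    have hg := vbf_get (G' := G') hL r j h1
    rw [List.getElem_ofFn, hg, List.get_eq_getElem]

theorem mem_mEdges_vbf_len (r : ℕ) (e : Sym2 ↥V) :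
    e ∈ mEdges (vbf G' V L) ((L r).length) ↔ e ∈ L r := by
  conv_rhs => rw [L_eq_ofFn (G' := G') hL r]
  rw [mem_ofFn'']
  constructor
  · rintro ⟨i, hi, he⟩; exact ⟨i, hi, he⟩
  · rintro ⟨i, hi, he⟩; exact ⟨i, hi, he⟩

theorem vbf_legal (hnd : ∀ r, (L r).Nodup)
    (hLe : ∀ r, ∀ e ∈ L r, e ∈ (G'.induce V).edgeSet) :
    BobLegal (G'.induce V) (vbf G' V L) := by
  intro j hex
  have hprevmem : ∀ e : Sym2 ↥V,
      e ∈ (List.range j).attach.map (fun i => vbf G' V L i.1) ↔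
        e ∈ mEdges (vbf G' V L) j := by
    intro e
    simp only [List.mem_map, List.mem_attach, true_and, Subtype.exists, List.mem_range]
    constructor
    · rintro ⟨i, hi, he⟩; exact ⟨i, hi, he⟩
    · rintro ⟨i, hi, he⟩; exact ⟨i, hi, he⟩
  by_cases h : ∃ r, j < (L r).length
  · obtain ⟨r, hr⟩ := h
    have hgj : vbf G' V L j = (L r).get ⟨j, hr⟩ := vbf_get hL r j hr
    constructor
    · rw [hgj]
      exact hLe r _ (List.get_mem _ _)
    · rintro ⟨i, hij, hieq⟩
      have hgi : vbf G' V L i = (L r).get ⟨i, hij.trans hr⟩ := vbf_get hL r i (hij.trans hr)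
      rw [hgj, hgi] at hieq
      have := ((hnd r).get_inj_iff).mp hieq
      simp only [Fin.mk.injEq] at this
      omega
  · have h2 : ∃ e, e ∈ (G'.induce V).edgeSet ∧
        e ∉ (List.range j).attach.map (fun i => vbf G' V L i.1) := by
      obtain ⟨e, he1, he2⟩ := hex
      exact ⟨e, he1, (hprevmem e).not.mpr he2⟩
    rw [vbf, dif_neg h, dif_pos h2]
    refine ⟨h2.choose_spec.1, ?_⟩
    have := h2.choose_spec.2
    rw [hprevmem] at this
    -- but the mEdges in the goal mentions `vbf` at smaller indices: they agree
    exact this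

end vbfFacts

/-- Alice's composite strategy on the big graph. -/
noncomputable def compA (A : List (Sym2 ↥V) → ↥V) (as : List V') (es : List (Sym2 V')) : V' :=
  if hes : es = [] then (A [] : V')
  else if vBlist G' V es ≠ vBlist G' V es.dropLast then
    (if (A (vBlist G' V es) : V') ∉ as then (A (vBlist G' V es) : V')
     else if h : ∃ x : V', x ∉ as then h.choose else (A (vBlist G' V es) : V'))
  else if h2 : ∃ x : V', x ∈ V ∧ x ∈ es.getLast hes ∧ x ∉ as then h2.choose
  else if h : ∃ x : V', x ∉ as then h.choose else (A (vBlist G' V es) : V')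

variable (A : List (Sym2 ↥V) → ↥V) {as : List V'} {es : List (Sym2 V')}

theorem compA_nil (as : List V') : compA (G' := G') (V := V) A as [] = (A [] : V') := by
  rw [compA, dif_pos rfl]

theorem compA_adv_eq (hes : es ≠ []) (hne : vBlist G' V es ≠ vBlist G' V es.dropLast) :
    compA (G' := G') A as es = (A (vBlist G' V es) : V') ∨ (A (vBlist G' V es) : V') ∈ as := by
  rw [compA, dif_neg hes, if_pos hne]
  by_cases hw : (A (vBlist G' V es) : V') ∉ as
  · rw [if_pos hw]; exact Or.inl rfl
  · exact Or.inr (not_not.mp hw)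

theorem compA_adv_fresh (hes : es ≠ []) (hne : vBlist G' V es ≠ vBlist G' V es.dropLast)
    (hfresh : ∃ x : V', x ∉ as) : compA (G' := G') A as es ∉ as := by
  rw [compA, dif_neg hes, if_pos hne]
  by_cases hw : (A (vBlist G' V es) : V') ∉ as
  · rwa [if_pos hw]
  · rw [if_neg hw, dif_pos hfresh]
    exact hfresh.choose_spec

theorem compA_react (hes : es ≠ []) (heq : ¬(vBlist G' V es ≠ vBlist G' V es.dropLast))
    (h2 : ∃ x : V', x ∈ V ∧ x ∈ es.getLast hes ∧ x ∉ as) :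
    compA (G' := G') A as es ∈ V ∧ compA (G' := G') A as es ∈ es.getLast hes ∧
      compA (G' := G') A as es ∉ as := by
  rw [compA, dif_neg hes, if_neg heq, dif_pos h2]
  exact h2.choose_spec

theorem compA_fallback_fresh (hes : es ≠ [])
    (heq : ¬(vBlist G' V es ≠ vBlist G' V es.dropLast))
    (hn2 : ¬∃ x : V', x ∈ V ∧ x ∈ es.getLast hes ∧ x ∉ as)
    (hfresh : ∃ x : V', x ∉ as) : compA (G' := G') A as es ∉ as := by
  rw [compA, dif_neg hes, if_neg heq, dif_neg hn2, dif_pos hfresh]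
  exact hfresh.choose_spec

end LemA

theorem alice_defends {V' : Type*} {G' : SimpleGraph V'} {V : Set V'} {n : ℕ} (hn : 2 ≤ n)
    (hdeg : ∀ v ∉ V, (G'.neighborSet v).encard < (n : ℕ∞))
    (halice : AliceKeepsBelow (G'.induce V) n) :
    ∀ s, BobWins G' s → s ≤ n - 1 := by
  classical
  obtain ⟨A, hAleg, hAbound⟩ := halice
  haveI hV : Nonempty ↥V := ⟨A []⟩
  intro s hs
  obtain ⟨B', hBleg', hBwin'⟩ := hs
  set am : List V' → List (Sym2 V') → V' := compA (G' := G') (V := V) A with ham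
  set a : ℕ → V' := playA am B' with ha
  set b : ℕ → Sym2 V' := playB am B' with hb
  have hconsB : ConsistentB B' a b := consistentB_play am B'
  have aeq : ∀ r, a r = am (List.ofFn fun i : Fin r => a i) (List.ofFn fun i : Fin r => b i) :=
    fun r => playA_eq am B' r
  set L : ℕ → List (Sym2 ↥V) := fun r => vBlist G' V (List.ofFn fun i : Fin r => b i) with hLdef
  have hstep : ∀ r, L (r+1) = vBstep G' V (L r) (b r) := by
    intro r
    rw [hLdef]
    dsimp only
    rw [ofFn_succ_concat b r, vBlist_append]
  have hLchain1 : ∀ r, L r <+: L (r+1) := by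
    intro r
    rw [hstep r]
    exact prefix_vBstep G' V _ _
  have hLchain : ∀ r1 r2, r1 ≤ r2 → L r1 <+: L r2 := by
    intro r1 r2 h
    induction r2 with
    | zero =>
      have : r1 = 0 := by omega
      subst this
      exact List.prefix_refl _
    | succ r2 ih =>
      rcases Nat.lt_or_ge r1 (r2+1) with h2 | h2
      · exact (ih (by omega)).trans (hLchain1 r2)
      · have : r1 = r2 + 1 := by omega
        subst this
        exact List.prefix_refl _
  have hLnd : ∀ r, (L r).Nodup := fun r => nodup_vBlist G' V _
  have hLe : ∀ r, ∀ e' ∈ L r, e' ∈ (G'.induce V).edgeSet := by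
    intro r e' he'
    exact ((mem_vBlist G' V _ e').mp he').1
  set vb : ℕ → Sym2 ↥V := vbf G' V L with hvb
  set va : ℕ → ↥V := fun j => A (List.ofFn fun i : Fin j => vb i) with hva
  have hconsA : ConsistentA A va vb := fun j => rfl
  have hvbleg : BobLegal (G'.induce V) vb := vbf_legal hLchain hLnd hLe
  have hbound := hAbound va vb hconsA hvbleg
  have hkmem : ∀ r (e' : Sym2 ↥V), e' ∈ mEdges vb ((L r).length) ↔ e' ∈ L r :=
    fun r e' => mem_mEdges_vbf_len hLchain r e'
  have hLxx : ∀ r (e' : Sym2 ↥V),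
      e' ∈ L r ↔ e' ∈ (G'.induce V).edgeSet ∧ emb V e' ∈ mEdges b r := by
    intro r e'
    rw [hLdef]
    dsimp only
    rw [mem_vBlist, mem_ofFn'']
    rfl
  have hVaK : ∀ r, (A (L r) : ↥V) = va ((L r).length) := by
    intro r
    rw [hva]
    exact congrArg A (L_eq_ofFn hLchain r)
  have hmVxx : ∀ (r : ℕ) (x : V'), x ∈ (List.ofFn fun i : Fin r => a i) ↔ x ∈ mVerts a r :=
    fun r x => (mem_mVerts_ofFn a r x).symm
  have hesne : ∀ r : ℕ, (List.ofFn fun i : Fin (r+1) => b i) ≠ [] := by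
    intro r h
    have := congrArg List.length h
    simp at this
  have hdrop : ∀ r : ℕ, (List.ofFn fun i : Fin (r+1) => b i).dropLast
      = (List.ofFn fun i : Fin r => b i) := fun r => dropLast_ofFn_succ b r
  have hlast : ∀ r : ℕ, (List.ofFn fun i : Fin (r+1) => b i).getLast (hesne r) = b r := by
    intro r
    have h1 : (List.ofFn fun i : Fin (r+1) => b i)
        = (List.ofFn fun i : Fin r => b i) ++ [b r] := ofFn_succ_concat b r
    have h2 : (List.ofFn fun i : Fin (r+1) => b i).getLast? = some (b r) := by
      rw [h1]
      exact List.getLast?_concat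
    have h3 := List.getLast?_eq_getLast (hesne r)
    rw [h3] at h2
    exact Option.some_injective _ h2
  -- the invariant P: all scheduled virtual Alice moves are really marked
  have P : ∀ r, ∀ j ≤ (L r).length, (va j : V') ∈ mVerts a (r+1) := by
    intro r
    induction r with
    | zero =>
      intro j hj
      have hL0 : (L 0).length = 0 := by rw [hLdef]; rfl
      rw [hL0, Nat.le_zero] at hj
      subst hj
      refine ⟨0, Nat.zero_lt_one, ?_⟩
      rw [aeq 0]
      rw [List.ofFn_zero, List.ofFn_zero, ham, compA_nil]
      rfl
    | succ r ih =>
      intro j hj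
      by_cases hne : L (r+1) = L r
      · rw [hne] at hj
        exact mVerts_mono a (by omega) (ih j hj)
      · have hne2 : vBstep G' V (L r) (b r) ≠ L r := fun h => hne ((hstep r).trans h)
        obtain ⟨e', _, _, _, he4⟩ := vBstep_eq_of_ne G' V (L r) (b r) hne2
        have hlen : (L (r+1)).length = (L r).length + 1 := by
          rw [hstep r, he4]
          simp
        rcases Nat.lt_or_ge j ((L r).length + 1) with hlt | hge
        · exact mVerts_mono a (by omega) (ih j (by omega))
        · have hj' : j = (L (r+1)).length := by omega
          subst hj'
          -- Alice makes the advance move in round r+1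
          have hvbl : vBlist G' V (List.ofFn fun i : Fin (r+1) => b i) = L (r+1) := by
            rw [hLdef]
          have hvbld : vBlist G' V (List.ofFn fun i : Fin (r+1) => b i).dropLast = L r := by
            rw [hdrop r, hLdef]
          have hcne : vBlist G' V (List.ofFn fun i : Fin (r+1) => b i)
              ≠ vBlist G' V (List.ofFn fun i : Fin (r+1) => b i).dropLast := by
            rw [hvbl, hvbld]
            exact hne
          have hadv := compA_adv_eq (G' := G') (V := V)
            (as := List.ofFn fun i : Fin (r+1) => a i) A (hesne r) hcne
          rw [hvbl, hVaK (r+1)] at hadv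
          rcases hadv with hadv | hadv
          · refine ⟨r+1, by omega, ?_⟩
            rw [aeq (r+1), ham, hadv]
          · rw [hmVxx (r+1)] at hadv
            exact mVerts_mono a (by omega) hadv
  -- Alice plays legally
  have haleg : AliceLegal a := by
    intro r hex
    obtain ⟨x, hx⟩ := hex
    have hfresh : ∃ y : V', y ∉ (List.ofFn fun i : Fin r => a i) := by
      refine ⟨x, ?_⟩
      rw [hmVxx r]
      exact hx
    rw [aeq r, ham]
    cases r with
    | zero =>
      rw [List.ofFn_zero, List.ofFn_zero, compA_nil]
      rintro ⟨i, hi, _⟩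
      omega
    | succ r =>
      rw [← hmVxx (r+1)]
      by_cases hcne : vBlist G' V (List.ofFn fun i : Fin (r+1) => b i)
          ≠ vBlist G' V (List.ofFn fun i : Fin (r+1) => b i).dropLast
      · exact compA_adv_fresh A (hesne r) hcne hfresh
      · by_cases h2 : ∃ y : V', y ∈ V ∧
            y ∈ (List.ofFn fun i : Fin (r+1) => b i).getLast (hesne r) ∧
            y ∉ (List.ofFn fun i : Fin (r+1) => a i)
        · exact (compA_react A (hesne r) hcne h2).2.2
        · exact compA_fallback_fresh A (hesne r) hcne h2 hfresh
  -- the cross-edge invariant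
  have CF : ∀ r, ∀ e ∈ mEdges b r, e ∈ G'.edgeSet → (∃ y ∈ e, y ∉ V) →
      ∀ x ∈ e, x ∈ V → x ∈ mVerts a (r+1) := by
    intro r
    induction r with
    | zero =>
      rintro e ⟨i, hi, _⟩
      omega
    | succ r ih =>
      intro e hmem he hcross x hxe hxV
      rcases (mem_mEdges_succ b r e).mp hmem with hold | hnew
      · exact mVerts_mono a (by omega) (ih e hold he hcross x hxe hxV)
      · by_cases hxm : x ∈ mVerts a (r+1)
        · exact mVerts_mono a (by omega) hxm
        · -- Alice reacts in round r+1
          obtain ⟨y, hy, hyV⟩ := hcross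
          have heqL : ¬(vBlist G' V (List.ofFn fun i : Fin (r+1) => b i)
              ≠ vBlist G' V (List.ofFn fun i : Fin (r+1) => b i).dropLast) := by
            rw [not_not, hdrop r]
            by_contra hne
            have hne2 : vBstep G' V (vBlist G' V (List.ofFn fun i : Fin r => b i)) (b r)
                ≠ vBlist G' V (List.ofFn fun i : Fin r => b i) := by
              intro h
              apply hne
              rw [ofFn_succ_concat b r, vBlist_append, h]
            obtain ⟨e'', _, hemb, _, _⟩ := vBstep_eq_of_ne G' V _ (b r) hne2
            rw [hnew] at hemb
            exact hyV (mem_of_mem_emb V (hemb ▸ hy))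
          have h2 : ∃ y' : V', y' ∈ V ∧
              y' ∈ (List.ofFn fun i : Fin (r+1) => b i).getLast (hesne r) ∧
              y' ∉ (List.ofFn fun i : Fin (r+1) => a i) := by
            refine ⟨x, hxV, ?_, ?_⟩
            · rw [hlast r, hnew]
              exact hxe
            · rw [hmVxx (r+1)]
              exact hxm
          have hres := compA_react (G' := G') (V := V) A (hesne r) heqL h2
          obtain ⟨hrV, hrLast, _⟩ := hres
          rw [hlast r, hnew] at hrLast
          -- the reacting vertex must be x
          obtain ⟨z, hz⟩ := Sym2.mem_iff_exists.mp hy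
          have hmemiff : ∀ w : V', w ∈ e ↔ w = y ∨ w = z := by
            intro w
            rw [hz]
            exact Sym2.mem_iff
          have hxz : x = z := by
            rcases (hmemiff x).mp hxe with h | h
            · exact absurd (h ▸ hxV) hyV
            · exact h
          have hrz : compA (G' := G') (V := V) A
              (List.ofFn fun i : Fin (r+1) => a i) (List.ofFn fun i : Fin (r+1) => b i) = x := by
            rcases (hmemiff _).mp hrLast with h | h
            · exact absurd (h ▸ hrV) hyV
            · rw [h, hxz]
          exact ⟨r+1, by omega, by rw [aeq (r+1), ham, hrz]⟩
  -- the final score bound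
  have hscorebound : ∀ r (v : V'), score G' a b r v ≤ ((n - 1 : ℕ) : ℕ∞) := by
    intro r v
    rw [score]
    split
    · exact zero_le
    case isFalse hm =>
    by_cases hvV : v ∈ V
    · -- v ∈ V : decompose into induced edges and the last move
      have hsub : {e | e ∈ G'.edgeSet ∧ v ∈ e ∧ e ∈ mEdges b (r + 1)} ⊆
          (emb V '' {e' | e' ∈ (G'.induce V).edgeSet ∧ (⟨v, hvV⟩ : ↥V) ∈ e' ∧
            e' ∈ mEdges vb ((L r).length)}) ∪ {b r} := by
        rintro e ⟨hee, hev, i, hir, rfl⟩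
        by_cases hi : i = r
        · subst hi
          exact Or.inr rfl
        · left
          have hiR : i < r := by omega
          by_cases hcross : ∃ y ∈ b i, y ∉ V
          · exact absurd (CF r (b i) ⟨i, hiR, rfl⟩ hee hcross v hev hvV) hm
          · push_neg at hcross
            obtain ⟨e', he'⟩ := eq_emb_of_both_mem V hcross
            rw [← he'] at hee hev
            refine ⟨e', ⟨(emb_edge G' V).mp hee, (mem_emb V (v := ⟨v, hvV⟩)).mp hev, ?_⟩, he'⟩
            rw [hkmem r, hLxx r]
            exact ⟨(emb_edge G' V).mp hee, ⟨i, hiR, he'.symm⟩⟩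
      calc {e | e ∈ G'.edgeSet ∧ v ∈ e ∧ e ∈ mEdges b (r + 1)}.encard
          ≤ ((emb V '' {e' | e' ∈ (G'.induce V).edgeSet ∧ (⟨v, hvV⟩ : ↥V) ∈ e' ∧
              e' ∈ mEdges vb ((L r).length)}) ∪ {b r}).encard := Set.encard_le_encard hsub
        _ ≤ (emb V '' {e' | e' ∈ (G'.induce V).edgeSet ∧ (⟨v, hvV⟩ : ↥V) ∈ e' ∧
              e' ∈ mEdges vb ((L r).length)}).encard + ({b r} : Set (Sym2 V')).encard :=
            Set.encard_union_le _ _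
        _ ≤ ((n - 2 : ℕ) : ℕ∞) + 1 := by
            gcongr
            · rw [Function.Injective.encard_image (emb_inj (V := V))]
              apply hbound
              rintro ⟨j, hj, hjeq⟩
              have hj' : j ≤ (L r).length := by omega
              have := P r j hj'
              rw [hjeq] at this
              exact hm this
            · rw [Set.encard_singleton]
        _ ≤ ((n - 1 : ℕ) : ℕ∞) := by
            rw [show ((1 : ℕ∞)) = ((1 : ℕ) : ℕ∞) from rfl, ← Nat.cast_add, Nat.cast_le]
            omega
    · -- v ∉ V : the degree bound
      refine (incident_le_neighbors v (mEdges b (r+1))).trans ?_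
      exact enat_le_pred (by omega) (hdeg v hvV)
  obtain ⟨r, v, hscore⟩ := hBwin' a b hconsB haleg
  have := hscore.trans (hscorebound r v)
  rw [Nat.cast_le] at this
  omega

end Aux


/-- Let `G'` be a graph, `V ⊆ V(G')`, and `G` the subgraph of `G'` induced on `V`.
If every vertex outside `V` has degree `< n` in `G'`, `col_ve(G) = n`, and Alice has a
strategy on `G` leaving, at the end of each of her turns, no unmarked vertex incident to
more than `n − 2` marked edges, then `col_ve(G') = n`. -/


theorem colVE_extension {V' : Type*} (G' : SimpleGraph V') (V : Set V') (n : ℕ)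
    (hdeg : ∀ v ∉ V, (G'.neighborSet v).encard < (n : ℕ∞))
    (hcol : colVE (G'.induce V) = (n : ℕ∞))
    (halice : AliceKeepsBelow (G'.induce V) n) :
    colVE G' = (n : ℕ∞) := by
  classical
  open Aux in
  have hn0 : n ≠ 0 := by
    intro h
    subst h
    rw [colVE, Nat.cast_zero] at hcol
    exact Aux.enat_succ_ne_zero _ hcol
  rcases Nat.lt_or_ge n 2 with hn1 | hn2
  · -- the case n = 1
    have hn : n = 1 := by omega
    subst hn
    have hGe : (G'.induce V).edgeSet = ∅ :=
      Aux.edgeSet_empty_of_colVE_one _ (by simpa using hcol)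
    have hG'e : G'.edgeSet = ∅ := by
      ext e
      simp only [Set.mem_empty_iff_false, iff_false]
      intro he
      have hend : ∀ x ∈ e, x ∈ V := by
        intro x hx
        by_contra hxV
        have hd := hdeg x hxV
        obtain ⟨u, rfl⟩ := Sym2.mem_iff_exists.mp hx
        have hadj : u ∈ G'.neighborSet x := G'.mem_edgeSet.mp he
        have h1 : 1 ≤ (G'.neighborSet x).encard :=
          Set.one_le_encard_iff_nonempty.mpr ⟨u, hadj⟩
        rw [Nat.cast_one] at hd
        exact absurd (h1.trans_lt hd) (lt_irrefl _)
      obtain ⟨e', rfl⟩ := Aux.eq_emb_of_both_mem V hend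
      rw [Aux.emb_edge, hGe] at he
      exact he
    have hup : ∀ s, BobWins G' s → s = 0 := by
      intro s hs
      by_cases hV' : Nonempty V'
      · obtain ⟨B', hleg, hwin⟩ := hs
        obtain ⟨r, v, hscore⟩ := hwin (playA (Aux.greedyA V') B') (playB (Aux.greedyA V') B')
          (Aux.consistentB_play _ _) (Aux.greedyA_legal B')
        have hzero : score G' (playA (Aux.greedyA V') B') (playB (Aux.greedyA V') B') r v = 0 := by
          rw [score]
          split
          · rfl
          · have : {e | e ∈ G'.edgeSet ∧ v ∈ e ∧
                e ∈ mEdges (playB (Aux.greedyA V') B') (r + 1)} = ∅ := by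
              rw [hG'e]
              ext f
              simp
            rw [this, Set.encard_empty]
        rw [hzero] at hscore
        exact_mod_cast le_antisymm hscore zero_le
      · obtain ⟨B', -, -⟩ := hs
        exact ((not_nonempty_iff.mp hV').false (Quot.out (B' [])).1).elim
    rw [Aux.colVE_eq_one G' hup, Nat.cast_one]
  · -- the case n ≥ 2
    have hBW : BobWins (G'.induce V) (n - 1) := Aux.bobWins_of_colVE hn2 hcol
    have hV : Nonempty ↥V := ⟨halice.choose []⟩
    have hlow : BobWins G' (n - 1) := Aux.bobWins_lift hn2 hBW
    have hup : ∀ s, BobWins G' s → s ≤ n - 1 := Aux.alice_defends hn2 hdeg halice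
    rw [Aux.colVE_eq_add_one G' hup hlow, Aux.enat_add_one (by omega : 1 ≤ n)]
end

section
/- Let G be a simple graph and let n ∈ ℕ. Consider any position of the vertex-edge marking game on G with Bob to move (i.e., arising after Alice's move in some round of a play) in which there exists an n-free path. Then Bob has a strategy for the remainder of the game that forces the score of the play to be at least n+3. -/
open VEGame

namespace VEGame

variable {V : Type*}

open Classical

/-- The edges of the path with vertex sequence `v 0, …, v k`. -/
def pathEdges (k : ℕ) (v : ℕ → V) : Set (Sym2 V) := {e | ∃ j < k, e = s(v j, v (j + 1))}

/-- An `n`-free path in a position (`MV` = marked vertices, `ME` = marked edges) of the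
vertex-edge marking game on `G`: a path with vertex sequence `v 0, …, v k`, `k ≥ 2`,
whose first and last edges are marked, whose interior vertices are unmarked, and whose
every interior vertex is incident to at least `n + 1` edges not in the path, at least
`n` of which are marked. -/
def IsNFreePath (G : SimpleGraph V) (MV : Set V) (ME : Set (Sym2 V)) (n : ℕ)
    (k : ℕ) (v : ℕ → V) : Prop :=
  2 ≤ k ∧
  (∀ i < k, G.Adj (v i) (v (i + 1))) ∧
  (∀ i ≤ k, ∀ j ≤ k, v i = v j → i = j) ∧
  s(v 0, v 1) ∈ ME ∧ s(v (k - 1), v k) ∈ ME ∧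
  (∀ i, 0 < i → i < k → v i ∉ MV) ∧
  (∀ i, 0 < i → i < k →
    ((n : ℕ∞) + 1 ≤ {e | e ∈ G.edgeSet ∧ v i ∈ e ∧ e ∉ pathEdges k v}.encard ∧
      (n : ℕ∞) ≤ {e | e ∈ G.edgeSet ∧ e ∈ ME ∧ v i ∈ e ∧ e ∉ pathEdges k v}.encard))

/-- The set of vertices marked after Alice's first `r` moves, starting from a position in
which the vertices in `MV` are already marked. -/
def mVertsFrom (MV : Set V) (a : ℕ → V) (r : ℕ) : Set V := MV ∪ {v | ∃ i < r, a i = v}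

/-- The set of edges marked after Bob's first `r` moves, starting from a position in
which the edges in `ME` are already marked. -/
def mEdgesFrom (ME : Set (Sym2 V)) (b : ℕ → Sym2 V) (r : ℕ) : Set (Sym2 V) :=
  ME ∪ {e | ∃ i < r, b i = e}

/-- In the game continued from a position with Bob to move, the players alternate
`b 0, a 0, b 1, a 1, …`.  Alice's moves are legal: whenever an unmarked vertex remains,
she marks a previously unmarked vertex. -/
def AliceLegalFrom (MV : Set V) (a : ℕ → V) : Prop :=
  ∀ r, (∃ v, v ∉ mVertsFrom MV a r) → a r ∉ mVertsFrom MV a r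

/-- Bob's moves are legal: whenever an unmarked edge of `G` remains, he marks a
previously unmarked edge of `G`. -/
def BobLegalFrom (G : SimpleGraph V) (ME : Set (Sym2 V)) (b : ℕ → Sym2 V) : Prop :=
  ∀ r, (∃ e ∈ G.edgeSet, e ∉ mEdgesFrom ME b r) →
    b r ∈ G.edgeSet ∧ b r ∉ mEdgesFrom ME b r

/-- In the continued game (Bob to move first) the score of vertex `v` just after Bob's
`r`-th move: `0` if `v` is marked, and otherwise the number of marked edges incident
to `v`. -/
noncomputable def scoreFrom (G : SimpleGraph V) (MV : Set V) (ME : Set (Sym2 V))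
    (a : ℕ → V) (b : ℕ → Sym2 V) (r : ℕ) (v : V) : ℕ∞ :=
  if v ∈ mVertsFrom MV a r then 0
  else {e | e ∈ G.edgeSet ∧ v ∈ e ∧ e ∈ mEdgesFrom ME b (r + 1)}.encard

/-- `a` is the sequence of Alice's moves when she follows strategy `A` in the continued
game (Bob moving first in each round). -/
def ConsistentAFrom (A : List (Sym2 V) → V) (a : ℕ → V) (b : ℕ → Sym2 V) : Prop :=
  ∀ r, a r = A (List.ofFn fun i : Fin (r + 1) => b i)

/-- `b` is the sequence of Bob's moves when he follows strategy `B` in the continued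
game (Bob moving first in each round). -/
def ConsistentBFrom (B : List V → Sym2 V) (a : ℕ → V) (b : ℕ → Sym2 V) : Prop :=
  ∀ r, b r = B (List.ofFn fun i : Fin r => a i)

/-- Bob, moving first from the position (`MV`, `ME`), has a strategy for the remainder of
the game forcing the score of the play to reach at least `s`. -/
def BobWinsFrom (G : SimpleGraph V) (MV : Set V) (ME : Set (Sym2 V)) (s : ℕ) : Prop :=
  ∃ B : List V → Sym2 V,
    (∀ a b, ConsistentBFrom B a b → AliceLegalFrom MV a → BobLegalFrom G ME b) ∧
    (∀ a b, ConsistentBFrom B a b → AliceLegalFrom MV a →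
      ∃ r v, (s : ℕ∞) ≤ scoreFrom G MV ME a b r v)

end VEGame
open VEGame

namespace VEGameAux

open Classical

variable {V : Type*}

/-- Course-of-values list of Bob's moves when he plays step function `f`. -/
def blist (f : List V → Set (Sym2 V) → Sym2 V) (ME : Set (Sym2 V)) (a : ℕ → V) :
    ℕ → List (Sym2 V)
  | 0 => []
  | r + 1 => blist f ME a r ++
      [f (List.ofFn fun i : Fin r => a i) (ME ∪ {e | e ∈ blist f ME a r})]

/-- Bob's move at round `r` when playing step function `f`. -/
def bmove (f : List V → Set (Sym2 V) → Sym2 V) (ME : Set (Sym2 V)) (a : ℕ → V)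
    (r : ℕ) : Sym2 V :=
  f (List.ofFn fun i : Fin r => a i) (ME ∪ {e | e ∈ blist f ME a r})

lemma mem_blist {f : List V → Set (Sym2 V) → Sym2 V} {ME : Set (Sym2 V)} {a : ℕ → V}
    {r : ℕ} {e : Sym2 V} : e ∈ blist f ME a r ↔ ∃ i < r, bmove f ME a i = e := by
  induction r with
  | zero => simp [blist]
  | succ r ih =>
    constructor
    · intro h
      rcases List.mem_append.mp h with h | h
      · obtain ⟨i, hi, he⟩ := ih.mp h
        exact ⟨i, by omega, he⟩
      · exact ⟨r, by omega, (List.mem_singleton.mp h).symm⟩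
    · rintro ⟨i, hi, he⟩
      rcases Nat.lt_succ_iff_lt_or_eq.mp hi with hi | rfl
      · exact List.mem_append.mpr (Or.inl (ih.mpr ⟨i, hi, he⟩))
      · exact List.mem_append.mpr (Or.inr (List.mem_singleton.mpr he.symm))

lemma blist_congr {f : List V → Set (Sym2 V) → Sym2 V} {ME : Set (Sym2 V)}
    {a a' : ℕ → V} {r : ℕ} (h : ∀ i < r, a i = a' i) :
    blist f ME a r = blist f ME a' r := by
  induction r with
  | zero => rfl
  | succ r ih =>
    have h1 : blist f ME a r = blist f ME a' r := ih fun i hi => h i (by omega)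
    have h2 : (fun i : Fin r => a i) = fun i : Fin r => a' i :=
      funext fun i => h i (by omega)
    show blist f ME a r ++ _ = blist f ME a' r ++ _
    rw [h1, h2]

lemma bmove_congr {f : List V → Set (Sym2 V) → Sym2 V} {ME : Set (Sym2 V)}
    {a a' : ℕ → V} {r : ℕ} (h : ∀ i < r, a i = a' i) :
    bmove f ME a r = bmove f ME a' r := by
  have h1 : blist f ME a r = blist f ME a' r := blist_congr h
  have h2 : (fun i : Fin r => a i) = fun i : Fin r => a' i :=
    funext fun i => h i i.2
  unfold bmove
  rw [h1, h2]

/-- From a step function (seeing Alice's history and the current set of marked edges)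
we obtain a strategy for Bob. -/
lemma strategy_spec (f : List V → Set (Sym2 V) → Sym2 V) (ME : Set (Sym2 V)) (d : V) :
    ∃ B : List V → Sym2 V, ∀ a b, ConsistentBFrom B a b →
      ∀ r, b r = f (List.ofFn fun i : Fin r => a i) (mEdgesFrom ME b r) := by
  refine ⟨fun l => bmove f ME (fun i => l.getD i d) l.length, fun a b hcons => ?_⟩
  have hbr : ∀ r, b r = bmove f ME a r := by
    intro r
    rw [hcons r]
    show bmove f ME _ (List.ofFn fun i : Fin r => a i).length = _
    rw [List.length_ofFn]
    refine bmove_congr fun i hi => ?_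
    rw [List.getD_eq_getElem _ _ (by simpa using hi), List.getElem_ofFn]
  intro r
  have hset : mEdgesFrom ME b r = ME ∪ {e | e ∈ blist f ME a r} := by
    unfold mEdgesFrom
    congr 1
    ext e
    simp only [Set.mem_setOf_eq, mem_blist]
    constructor
    · rintro ⟨i, hi, he⟩; exact ⟨i, hi, by rw [← hbr i]; exact he⟩
    · rintro ⟨i, hi, he⟩; exact ⟨i, hi, by rw [hbr i]; exact he⟩
  rw [hbr r, hset]
  rfl

/-- A default legal move. -/
noncomputable def defEdge (G : SimpleGraph V) (junk : Sym2 V) (E : Set (Sym2 V)) :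
    Sym2 V :=
  if h : ∃ e, e ∈ G.edgeSet ∧ e ∉ E then h.choose else junk

lemma defEdge_legal {G : SimpleGraph V} {junk : Sym2 V} {E : Set (Sym2 V)}
    (h : ∃ e ∈ G.edgeSet, e ∉ E) :
    defEdge G junk E ∈ G.edgeSet ∧ defEdge G junk E ∉ E := by
  rw [defEdge, dif_pos h]
  exact ⟨h.choose_spec.1, h.choose_spec.2⟩

/-- The finishing move: an unmarked edge at `u` avoiding the path `P`, if one exists. -/
noncomputable def finEdge (G : SimpleGraph V) (u : V) (P : Set (Sym2 V))
    (junk : Sym2 V) (E : Set (Sym2 V)) : Sym2 V :=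
  if h : ∃ e, e ∈ G.edgeSet ∧ u ∈ e ∧ e ∉ P ∧ e ∉ E then h.choose else defEdge G junk E

lemma finEdge_legal {G : SimpleGraph V} {u : V} {P : Set (Sym2 V)} {junk : Sym2 V}
    {E : Set (Sym2 V)} (h : ∃ e ∈ G.edgeSet, e ∉ E) :
    finEdge G u P junk E ∈ G.edgeSet ∧ finEdge G u P junk E ∉ E := by
  rw [finEdge]
  split_ifs with h'
  · exact ⟨h'.choose_spec.1, h'.choose_spec.2.2.2⟩
  · exact defEdge_legal h

lemma finEdge_spec {G : SimpleGraph V} {u : V} {P : Set (Sym2 V)} {junk : Sym2 V}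
    {E : Set (Sym2 V)} (h : ∃ e, e ∈ G.edgeSet ∧ u ∈ e ∧ e ∉ P ∧ e ∉ E) :
    finEdge G u P junk E ∈ G.edgeSet ∧ u ∈ finEdge G u P junk E ∧
      finEdge G u P junk E ∉ P ∧ finEdge G u P junk E ∉ E := by
  rw [finEdge, dif_pos h]
  exact h.choose_spec

/-- Bob's step function for the base case (the second path edge already marked). -/
noncomputable def stepCaseA (fin1 fdef : Set (Sym2 V) → Sym2 V) :
    List V → Set (Sym2 V) → Sym2 V
  | [], E => fin1 E
  | _ :: _, E => fdef E

/-- Bob's step function for the recursive case. -/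
noncomputable def stepCaseB [DecidableEq V] (e0 : Sym2 V) (u : V)
    (B' : List V → Sym2 V) (fin1 fdef : Set (Sym2 V) → Sym2 V) :
    List V → Set (Sym2 V) → Sym2 V
  | [], _ => e0
  | a0 :: t, E => if a0 = u then B' t else if t = [] then fin1 E else fdef E

lemma mVertsFrom_zero (MV : Set V) (a : ℕ → V) : mVertsFrom MV a 0 = MV := by
  ext x; simp [mVertsFrom]

lemma mEdgesFrom_zero (ME : Set (Sym2 V)) (b : ℕ → Sym2 V) : mEdgesFrom ME b 0 = ME := by
  ext x; simp [mEdgesFrom]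

lemma mEdgesFrom_mono {ME : Set (Sym2 V)} {b : ℕ → Sym2 V} {r r' : ℕ} (h : r ≤ r') :
    mEdgesFrom ME b r ⊆ mEdgesFrom ME b r' := by
  rintro e (he | ⟨i, hi, he⟩)
  · exact Or.inl he
  · exact Or.inr ⟨i, by omega, he⟩

lemma mVertsFrom_shift (MV : Set V) (a : ℕ → V) (r : ℕ) :
    mVertsFrom (MV ∪ {a 0}) (fun i => a (i + 1)) r = mVertsFrom MV a (r + 1) := by
  ext x
  simp only [mVertsFrom, Set.mem_union, Set.mem_setOf_eq, Set.mem_singleton_iff]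
  constructor
  · rintro ((hx | hx) | ⟨i, hi, hx⟩)
    · exact Or.inl hx
    · exact Or.inr ⟨0, by omega, hx.symm⟩
    · exact Or.inr ⟨i + 1, by omega, hx⟩
  · rintro (hx | ⟨i, hi, hx⟩)
    · exact Or.inl (Or.inl hx)
    · cases i with
      | zero => exact Or.inl (Or.inr hx.symm)
      | succ j => exact Or.inr ⟨j, by omega, hx⟩

lemma mEdgesFrom_shift (ME : Set (Sym2 V)) (b : ℕ → Sym2 V) (r : ℕ) :
    mEdgesFrom (insert (b 0) ME) (fun i => b (i + 1)) r = mEdgesFrom ME b (r + 1) := by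
  ext x
  simp only [mEdgesFrom, Set.mem_union, Set.mem_setOf_eq, Set.mem_insert_iff]
  constructor
  · rintro ((hx | hx) | ⟨i, hi, hx⟩)
    · exact Or.inr ⟨0, by omega, hx.symm⟩
    · exact Or.inl hx
    · exact Or.inr ⟨i + 1, by omega, hx⟩
  · rintro (hx | ⟨i, hi, hx⟩)
    · exact Or.inl (Or.inr hx)
    · cases i with
      | zero => exact Or.inl (Or.inl hx.symm)
      | succ j => exact Or.inr ⟨j, by omega, hx⟩

end VEGameAux

namespace VEGameAux

open Classical

lemma key_aux {V : Type*} {G : SimpleGraph V} {ME : Set (Sym2 V)} {n k : ℕ} {v : ℕ → V}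
    (hME : ME ⊆ G.edgeSet)
    (hk2 : 2 ≤ k)
    (hadj : ∀ i < k, G.Adj (v i) (v (i + 1)))
    (hinj : ∀ i ≤ k, ∀ j ≤ k, v i = v j → i = j)
    (hfst : s(v 0, v 1) ∈ ME)
    (hcnt1 : (n : ℕ∞) + 1 ≤ {e | e ∈ G.edgeSet ∧ v 1 ∈ e ∧ e ∉ pathEdges k v}.encard ∧
      (n : ℕ∞) ≤ {e | e ∈ G.edgeSet ∧ e ∈ ME ∧ v 1 ∈ e ∧ e ∉ pathEdges k v}.encard)
    (W : Set (Sym2 V)) (hMEW : ME ⊆ W) (h12W : s(v 1, v 2) ∈ W)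
    (hcase : (∃ e, e ∈ G.edgeSet ∧ v 1 ∈ e ∧ e ∉ pathEdges k v ∧ e ∉ ME ∧ e ∈ W) ∨
      (∀ e, e ∈ G.edgeSet → v 1 ∈ e → e ∉ pathEdges k v → e ∈ W)) :
    ((n + 3 : ℕ) : ℕ∞) ≤ {e | e ∈ G.edgeSet ∧ v 1 ∈ e ∧ e ∈ W}.encard := by
  have h1k : 1 < k := by omega
  have hv01 : v 0 ≠ v 1 := fun h => by have := hinj 0 (by omega) 1 (by omega) h; omega
  have hv02 : v 0 ≠ v 2 := fun h => by have := hinj 0 (by omega) 2 (by omega) h; omega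
  have hne : s(v 0, v 1) ≠ s(v 1, v 2) := by
    intro h
    rcases Sym2.eq_iff.mp h with ⟨h1, _⟩ | ⟨h1, _⟩
    · exact hv01 h1
    · exact hv02 h1
  have hfstP : s(v 0, v 1) ∈ pathEdges k v := ⟨0, by omega, rfl⟩
  have hsndP : s(v 1, v 2) ∈ pathEdges k v := ⟨1, h1k, rfl⟩
  have hE01 : s(v 0, v 1) ∈ G.edgeSet := G.mem_edgeSet.mpr (hadj 0 (by omega))
  have hE12 : s(v 1, v 2) ∈ G.edgeSet := G.mem_edgeSet.mpr (hadj 1 h1k)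
  have hm01 : v 1 ∈ s(v 0, v 1) := by simp
  have hm12 : v 1 ∈ s(v 1, v 2) := by simp
  rcases hcase with ⟨e, he1, he2, he3, he4, he5⟩ | hall
  · set S : Set (Sym2 V) := {x | x ∈ G.edgeSet ∧ x ∈ ME ∧ v 1 ∈ x ∧ x ∉ pathEdges k v}
      with hSdef
    have hS : (n : ℕ∞) ≤ S.encard := hcnt1.2
    have h1 : e ∉ S := fun hmem => he4 hmem.2.1
    have h2 : s(v 1, v 2) ∉ insert e S := by
      rintro (h | h)
      · exact he3 (h ▸ hsndP)
      · exact h.2.2.2 hsndP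
    have h3 : s(v 0, v 1) ∉ insert (s(v 1, v 2)) (insert e S) := by
      rintro (h | h | h)
      · exact hne h
      · exact he3 (h ▸ hfstP)
      · exact h.2.2.2 hfstP
    have hsub : insert (s(v 0, v 1)) (insert (s(v 1, v 2)) (insert e S)) ⊆
        {x | x ∈ G.edgeSet ∧ v 1 ∈ x ∧ x ∈ W} := by
      rintro x (rfl | rfl | rfl | hx)
      · exact ⟨hE01, hm01, hMEW hfst⟩
      · exact ⟨hE12, hm12, h12W⟩
      · exact ⟨he1, he2, he5⟩
      · exact ⟨hx.1, hx.2.2.1, hMEW hx.2.1⟩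
    calc ((n + 3 : ℕ) : ℕ∞) = (n : ℕ∞) + 1 + 1 + 1 := by push_cast; ring
      _ ≤ S.encard + 1 + 1 + 1 := by
          exact add_le_add_left (add_le_add_left (add_le_add_left hS 1) 1) 1
      _ = (insert (s(v 0, v 1)) (insert (s(v 1, v 2)) (insert e S))).encard := by
          rw [Set.encard_insert_of_notMem h3, Set.encard_insert_of_notMem h2,
            Set.encard_insert_of_notMem h1]
      _ ≤ _ := Set.encard_mono hsub
  · set U : Set (Sym2 V) := {x | x ∈ G.edgeSet ∧ v 1 ∈ x ∧ x ∉ pathEdges k v} with hUdef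
    have hU : (n : ℕ∞) + 1 ≤ U.encard := hcnt1.1
    have h2 : s(v 1, v 2) ∉ U := fun h => h.2.2 hsndP
    have h3 : s(v 0, v 1) ∉ insert (s(v 1, v 2)) U := by
      rintro (h | h)
      · exact hne h
      · exact h.2.2 hfstP
    have hsub : insert (s(v 0, v 1)) (insert (s(v 1, v 2)) U) ⊆
        {x | x ∈ G.edgeSet ∧ v 1 ∈ x ∧ x ∈ W} := by
      rintro x (rfl | rfl | hx)
      · exact ⟨hE01, hm01, hMEW hfst⟩
      · exact ⟨hE12, hm12, h12W⟩
      · exact ⟨hx.1, hx.2.1, hall x hx.1 hx.2.1 hx.2.2⟩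
    calc ((n + 3 : ℕ) : ℕ∞) = (n : ℕ∞) + 1 + 1 + 1 := by push_cast; ring
      _ ≤ U.encard + 1 + 1 := by
          exact add_le_add_left (add_le_add_left hU 1) 1
      _ = (insert (s(v 0, v 1)) (insert (s(v 1, v 2)) U)).encard := by
          rw [Set.encard_insert_of_notMem h3, Set.encard_insert_of_notMem h2]
      _ ≤ _ := Set.encard_mono hsub

lemma main_aux {V : Type*} (G : SimpleGraph V) (n : ℕ) :
    ∀ k, ∀ (MV : Set V) (ME : Set (Sym2 V)), ME ⊆ G.edgeSet →
      ∀ v : ℕ → V, IsNFreePath G MV ME n k v → BobWinsFrom G MV ME (n + 3) := by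
  intro k
  induction k using Nat.strong_induction_on with
  | _ k IH =>
  intro MV ME hME v hpath
  classical
  obtain ⟨hk2, hadj, hinj, hfst, hlst, hunm, hcnt⟩ := hpath
  have h1k : 1 < k := by omega
  have hv1MV : v 1 ∉ MV := hunm 1 one_pos h1k
  have hE12 : s(v 1, v 2) ∈ G.edgeSet := G.mem_edgeSet.mpr (hadj 1 h1k)
  have hcnt1 := hcnt 1 one_pos h1k
  set P : Set (Sym2 V) := pathEdges k v with hPdef
  set junk : Sym2 V := s(v 0, v 0) with hjunk
  have key := key_aux hME hk2 hadj hinj hfst hcnt1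
  by_cases hc : s(v 1, v 2) ∈ ME
  · -- base case: the edge v1v2 is already marked
    obtain ⟨B, hB⟩ :=
      strategy_spec (stepCaseA (finEdge G (v 1) P junk) (defEdge G junk)) ME (v 0)
    refine ⟨B, ?_, ?_⟩
    · intro a b hcons hAl r hex
      have hbr := hB a b hcons r
      cases r with
      | zero =>
        simp only [List.ofFn_zero, stepCaseA] at hbr
        rw [hbr]; exact finEdge_legal hex
      | succ r =>
        simp only [List.ofFn_succ, stepCaseA] at hbr
        rw [hbr]; exact defEdge_legal hex
    · intro a b hcons hAl
      refine ⟨0, v 1, ?_⟩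
      have hv1un : v 1 ∉ mVertsFrom MV a 0 := by
        rw [mVertsFrom_zero]; exact hv1MV
      rw [scoreFrom, if_neg hv1un]
      have hb0 := hB a b hcons 0
      simp only [List.ofFn_zero, stepCaseA] at hb0
      rw [mEdgesFrom_zero] at hb0
      refine key (mEdgesFrom ME b 1) Set.subset_union_left (Or.inl hc) ?_
      by_cases hfin : ∃ e, e ∈ G.edgeSet ∧ v 1 ∈ e ∧ e ∉ P ∧ e ∉ ME
      · left
        have spec := finEdge_spec (junk := junk) hfin
        exact ⟨finEdge G (v 1) P junk ME, spec.1, spec.2.1, spec.2.2.1, spec.2.2.2,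
          Or.inr ⟨0, one_pos, hb0⟩⟩
      · right
        push_neg at hfin
        intro e h1 h2 h3
        exact Or.inl (hfin e h1 h2 h3)
  · -- recursive case
    have hk3 : 3 ≤ k := by
      by_contra h
      have hk : k = 2 := by omega
      subst hk
      exact hc hlst
    have hpath' : IsNFreePath G (MV ∪ {v 1}) (insert (s(v 1, v 2)) ME) n (k - 1)
        (fun i => v (i + 1)) := by
      have hPsub : pathEdges (k - 1) (fun j => v (j + 1)) ⊆ pathEdges k v := by
        rintro e ⟨j, hj, rfl⟩
        exact ⟨j + 1, by omega, rfl⟩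
      refine ⟨by omega, ?_, ?_, ?_, ?_, ?_, ?_⟩
      · intro i hi; exact hadj (i + 1) (by omega)
      · intro i hi j hj hvij
        have := hinj (i + 1) (by omega) (j + 1) (by omega) hvij
        omega
      · exact Set.mem_insert _ _
      · show s(v (k - 1 - 1 + 1), v (k - 1 + 1)) ∈ _
        have e1 : k - 1 - 1 + 1 = k - 1 := by omega
        have e2 : k - 1 + 1 = k := by omega
        rw [e1, e2]
        exact Set.mem_insert_of_mem _ hlst
      · intro i hi0 hik
        rintro (h | h)
        · exact hunm (i + 1) (by omega) (by omega) h
        · have := hinj (i + 1) (by omega) 1 (by omega) h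
          omega
      · intro i hi0 hik
        have hc1 := hcnt (i + 1) (by omega) (by omega)
        constructor
        · refine le_trans hc1.1 (Set.encard_mono ?_)
          rintro e ⟨h1, h2, h3⟩
          exact ⟨h1, h2, fun hm => h3 (hPsub hm)⟩
        · refine le_trans hc1.2 (Set.encard_mono ?_)
          rintro e ⟨h1, h2, h3, h4⟩
          exact ⟨h1, Set.mem_insert_of_mem _ h2, h3, fun hm => h4 (hPsub hm)⟩
    obtain ⟨B', hB'leg, hB'win⟩ := IH (k - 1) (by omega) (MV ∪ {v 1})
      (insert (s(v 1, v 2)) ME) (Set.insert_subset hE12 hME) (fun i => v (i + 1)) hpath'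
    obtain ⟨B, hB⟩ := strategy_spec
      (stepCaseB (s(v 1, v 2)) (v 1) B' (finEdge G (v 1) P junk) (defEdge G junk))
      ME (v 0)
    have hb0 : ∀ a b, ConsistentBFrom B a b → b 0 = s(v 1, v 2) := by
      intro a b hcons
      have := hB a b hcons 0
      simpa only [List.ofFn_zero, stepCaseB] using this
    have hbsucc : ∀ a b, ConsistentBFrom B a b → ∀ s, b (s + 1) =
        (if a 0 = v 1 then B' (List.ofFn fun i : Fin s => a (i + 1))
          else if (List.ofFn fun i : Fin s => a (i + 1)) = []
            then finEdge G (v 1) P junk (mEdgesFrom ME b (s + 1))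
            else defEdge G junk (mEdgesFrom ME b (s + 1))) := by
      intro a b hcons s
      have hbr := hB a b hcons (s + 1)
      simp only [List.ofFn_succ, Fin.val_zero, Fin.val_succ, stepCaseB] at hbr
      exact hbr
    refine ⟨B, ?_, ?_⟩
    · -- legality
      intro a b hcons hAl r hex
      cases r with
      | zero =>
        rw [hb0 a b hcons]
        refine ⟨hE12, ?_⟩
        rw [mEdgesFrom_zero]
        exact hc
      | succ r =>
        have hbr := hbsucc a b hcons r
        by_cases h : a 0 = v 1
        · rw [if_pos h] at hbr
          have hcons' : ConsistentBFrom B' (fun i => a (i + 1)) (fun i => b (i + 1)) := by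
            intro s
            have := hbsucc a b hcons s
            rw [if_pos h] at this
            exact this
          have hveq : ∀ s, mVertsFrom (MV ∪ {v 1}) (fun i => a (i + 1)) s
              = mVertsFrom MV a (s + 1) := by
            intro s
            rw [← h]
            exact mVertsFrom_shift MV a s
          have heeq : ∀ s, mEdgesFrom (insert (s(v 1, v 2)) ME) (fun i => b (i + 1)) s
              = mEdgesFrom ME b (s + 1) := by
            intro s
            rw [← hb0 a b hcons]
            exact mEdgesFrom_shift ME b s
          have hA' : AliceLegalFrom (MV ∪ {v 1}) (fun i => a (i + 1)) := by
            intro s hex'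
            rw [hveq s] at hex' ⊢
            exact hAl (s + 1) hex'
          have hleg := hB'leg _ _ hcons' hA' r
          rw [heeq r] at hleg
          exact hleg hex
        · rw [if_neg h] at hbr
          cases r with
          | zero =>
            rw [List.ofFn_zero, if_pos rfl] at hbr
            rw [hbr]
            exact finEdge_legal hex
          | succ s =>
            rw [List.ofFn_succ, if_neg (List.cons_ne_nil _ _)] at hbr
            rw [hbr]
            exact defEdge_legal hex
    · -- winning
      intro a b hcons hAl
      have hb0' := hb0 a b hcons
      by_cases h : a 0 = v 1
      · have hcons' : ConsistentBFrom B' (fun i => a (i + 1)) (fun i => b (i + 1)) := by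
          intro s
          have := hbsucc a b hcons s
          rw [if_pos h] at this
          exact this
        have hveq : ∀ s, mVertsFrom (MV ∪ {v 1}) (fun i => a (i + 1)) s
            = mVertsFrom MV a (s + 1) := by
          intro s
          rw [← h]
          exact mVertsFrom_shift MV a s
        have heeq : ∀ s, mEdgesFrom (insert (s(v 1, v 2)) ME) (fun i => b (i + 1)) s
            = mEdgesFrom ME b (s + 1) := by
          intro s
          rw [← hb0']
          exact mEdgesFrom_shift ME b s
        have hA' : AliceLegalFrom (MV ∪ {v 1}) (fun i => a (i + 1)) := by
          intro s hex'
          rw [hveq s] at hex' ⊢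
          exact hAl (s + 1) hex'
        obtain ⟨r, u, hsc⟩ := hB'win _ _ hcons' hA'
        refine ⟨r + 1, u, ?_⟩
        rw [scoreFrom] at hsc ⊢
        rw [hveq r, heeq (r + 1)] at hsc
        exact hsc
      · refine ⟨1, v 1, ?_⟩
        have hv1un : v 1 ∉ mVertsFrom MV a 1 := by
          rintro (h' | ⟨i, hi, h'⟩)
          · exact hv1MV h'
          · have : i = 0 := by omega
            subst this
            exact h h'
        rw [scoreFrom, if_neg hv1un]
        have hb1 := hbsucc a b hcons 0
        rw [if_neg h, List.ofFn_zero, if_pos rfl] at hb1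
        refine key (mEdgesFrom ME b 2) Set.subset_union_left
          (Or.inr ⟨0, by omega, hb0'⟩) ?_
        by_cases hfin : ∃ e, e ∈ G.edgeSet ∧ v 1 ∈ e ∧ e ∉ P ∧ e ∉ mEdgesFrom ME b 1
        · left
          have spec := finEdge_spec (junk := junk) hfin
          exact ⟨finEdge G (v 1) P junk (mEdgesFrom ME b 1), spec.1, spec.2.1,
            spec.2.2.1, fun hm => spec.2.2.2 (Or.inl hm),
            Or.inr ⟨1, by omega, hb1⟩⟩
        · right
          push_neg at hfin
          intro e h1 h2 h3
          exact mEdgesFrom_mono (by omega) (hfin e h1 h2 h3)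

end VEGameAux

/-- If, in a position of the vertex-edge marking game on `G` with Bob to move, there is an
`n`-free path, then Bob has a strategy for the remainder of the game forcing the score of
the play to be at least `n + 3`. -/
theorem bobWins_of_nFreePath {V : Type*} (G : SimpleGraph V) (n : ℕ)
    (MV : Set V) (ME : Set (Sym2 V)) (hME : ME ⊆ G.edgeSet)
    (k : ℕ) (v : ℕ → V) (hpath : IsNFreePath G MV ME n k v) :
    BobWinsFrom G MV ME (n + 3) := by
  exact VEGameAux.main_aux G n k MV ME hME v hpath
end

section
/- Let G be a simple graph and let n ∈ ℕ. Then col_ve(G) ≥ n+4 if and only if Bob has a strategy in the vertex-edge marking game on G that guarantees that, in every play in which he follows it, there is a round at which it is Bob's turn and an n-free path exists in the current position. -/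
open VEGame

namespace VEGame

open scoped Classical

variable {V : Type*}

lemma mVerts_succ (a : ℕ → V) (r : ℕ) : mVerts a (r+1) = insert (a r) (mVerts a r) := by
  ext v
  simp only [mVerts, Set.mem_setOf_eq, Set.mem_insert_iff]
  constructor
  · rintro ⟨i, hi, rfl⟩
    rcases Nat.lt_succ_iff_lt_or_eq.mp hi with h | h
    · exact Or.inr ⟨i, h, rfl⟩
    · subst h; exact Or.inl rfl
  · rintro (rfl | ⟨i, hi, rfl⟩)
    · exact ⟨r, Nat.lt_succ_self r, rfl⟩
    · exact ⟨i, Nat.lt_succ_of_lt hi, rfl⟩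

lemma mEdges_succ (b : ℕ → Sym2 V) (r : ℕ) : mEdges b (r+1) = insert (b r) (mEdges b r) := by
  ext e
  simp only [mEdges, Set.mem_setOf_eq, Set.mem_insert_iff]
  constructor
  · rintro ⟨i, hi, rfl⟩
    rcases Nat.lt_succ_iff_lt_or_eq.mp hi with h | h
    · exact Or.inr ⟨i, h, rfl⟩
    · subst h; exact Or.inl rfl
  · rintro (rfl | ⟨i, hi, rfl⟩)
    · exact ⟨r, Nat.lt_succ_self r, rfl⟩
    · exact ⟨i, Nat.lt_succ_of_lt hi, rfl⟩

lemma mEdges_zero (b : ℕ → Sym2 V) : mEdges b 0 = ∅ := by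
  ext e; simp [mEdges]

lemma mEdges_subset_succ (b : ℕ → Sym2 V) (r : ℕ) : mEdges b r ⊆ mEdges b (r+1) := by
  rw [mEdges_succ]; exact Set.subset_insert _ _

lemma mVerts_subset_succ (a : ℕ → V) (r : ℕ) : mVerts a r ⊆ mVerts a (r+1) := by
  rw [mVerts_succ]; exact Set.subset_insert _ _

lemma pathEdges_shift_subset (k : ℕ) (w : ℕ → V) :
    pathEdges (k-1) (fun i => w (i+1)) ⊆ pathEdges k w := by
  rintro e ⟨j, hj, rfl⟩
  exact ⟨j+1, by omega, rfl⟩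

lemma pathEdges_le_subset {k k' : ℕ} (hk : k' ≤ k) (w : ℕ → V) :
    pathEdges k' w ⊆ pathEdges k w := by
  rintro e ⟨j, hj, rfl⟩
  exact ⟨j, by omega, rfl⟩

lemma nfp_shift {G : SimpleGraph V} {MV MV' : Set V} {ME ME' : Set (Sym2 V)} {n k : ℕ}
    {w : ℕ → V} (h : IsNFreePath G MV ME n k w) (hk : 3 ≤ k)
    (h1 : s(w 1, w 2) ∈ ME') (hME : ME ⊆ ME')
    (hMV : ∀ i, 1 < i → i < k → w i ∉ MV') :
    IsNFreePath G MV' ME' n (k-1) (fun i => w (i+1)) := by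
  obtain ⟨hk2, hadj, hinj, hfirst, hlast, hint, hfree⟩ := h
  refine ⟨by omega, ?_, ?_, h1, ?_, ?_, ?_⟩
  · intro i hi; exact hadj (i+1) (by omega)
  · intro i hi j hj hij
    have := hinj (i+1) (by omega) (j+1) (by omega) hij
    omega
  · show s(w (k-1-1+1), w (k-1+1)) ∈ ME'
    have e1 : k - 1 - 1 + 1 = k - 1 := by omega
    have e2 : k - 1 + 1 = k := by omega
    rw [e1, e2]; exact hME hlast
  · intro i h0 hik hmem
    exact hMV (i+1) (by omega) (by omega) hmem
  · intro i h0 hik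
    have hf := hfree (i+1) (by omega) (by omega)
    constructor
    · refine le_trans hf.1 (Set.encard_le_encard ?_)
      rintro e ⟨heG, hev, hep⟩
      exact ⟨heG, hev, fun hc => hep (pathEdges_shift_subset k w hc)⟩
    · refine le_trans hf.2 (Set.encard_le_encard ?_)
      rintro e ⟨heG, heM, hev, hep⟩
      exact ⟨heG, hME heM, hev, fun hc => hep (pathEdges_shift_subset k w hc)⟩

lemma nfp_short {G : SimpleGraph V} {MV MV' : Set V} {ME ME' : Set (Sym2 V)} {n k : ℕ}
    {w : ℕ → V} (h : IsNFreePath G MV ME n k w) (hk : 3 ≤ k)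
    (h1 : s(w 1, w 2) ∈ ME') (hME : ME ⊆ ME') (hMV : w 1 ∉ MV') :
    IsNFreePath G MV' ME' n 2 w := by
  obtain ⟨hk2, hadj, hinj, hfirst, hlast, hint, hfree⟩ := h
  refine ⟨le_refl 2, fun i hi => hadj i (by omega),
    fun i hi j hj hij => hinj i (by omega) j (by omega) hij, hME hfirst, ?_, ?_, ?_⟩
  · show s(w 1, w 2) ∈ ME'
    exact h1
  · intro i hi0 hi2
    have : i = 1 := by omega
    subst this; exact hMV
  · intro i hi0 hi2
    have : i = 1 := by omega
    subst this
    have hf := hfree 1 one_pos (by omega)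
    constructor
    · refine le_trans hf.1 (Set.encard_le_encard ?_)
      rintro e ⟨heG, hev, hep⟩
      exact ⟨heG, hev, fun hc => hep (pathEdges_le_subset (by omega) w hc)⟩
    · refine le_trans hf.2 (Set.encard_le_encard ?_)
      rintro e ⟨heG, heM, hev, hep⟩
      exact ⟨heG, hME heM, hev, fun hc => hep (pathEdges_le_subset (by omega) w hc)⟩

/-- There is an `n`-free path in the current position. -/
def HasPath (G : SimpleGraph V) (n : ℕ) (MV : Set V) (ME : Set (Sym2 V)) : Prop :=
  ∃ k w, IsNFreePath G MV ME n k w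

/-- The minimal length of an `n`-free path in the current position. -/
noncomputable def pK (G : SimpleGraph V) (n : ℕ) (MV : Set V) (ME : Set (Sym2 V)) : ℕ :=
  sInf {k | ∃ w, IsNFreePath G MV ME n k w}

lemma pK_spec {G : SimpleGraph V} {n : ℕ} {MV : Set V} {ME : Set (Sym2 V)}
    (h : HasPath G n MV ME) : ∃ w, IsNFreePath G MV ME n (pK G n MV ME) w := by
  obtain ⟨k, w, hw⟩ := h
  exact Nat.sInf_mem (s := {k | ∃ w, IsNFreePath G MV ME n k w}) ⟨k, w, hw⟩

/-- A chosen minimal `n`-free path. -/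
noncomputable def pW {G : SimpleGraph V} {n : ℕ} {MV : Set V} {ME : Set (Sym2 V)}
    (h : HasPath G n MV ME) : ℕ → V := (pK_spec h).choose

lemma pW_spec {G : SimpleGraph V} {n : ℕ} {MV : Set V} {ME : Set (Sym2 V)}
    (h : HasPath G n MV ME) : IsNFreePath G MV ME n (pK G n MV ME) (pW h) :=
  (pK_spec h).choose_spec

lemma pK_le {G : SimpleGraph V} {n k : ℕ} {MV : Set V} {ME : Set (Sym2 V)} {w : ℕ → V}
    (hw : IsNFreePath G MV ME n k w) : pK G n MV ME ≤ k :=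
  Nat.sInf_le ⟨w, hw⟩

lemma attack_fresh {G : SimpleGraph V} {n : ℕ} {MV : Set V} {ME : Set (Sym2 V)}
    (hp : HasPath G n MV ME) (h3 : 3 ≤ pK G n MV ME) :
    s(pW hp 1, pW hp 2) ∈ G.edgeSet ∧ s(pW hp 1, pW hp 2) ∉ ME := by
  have hw := pW_spec hp
  refine ⟨G.mem_edgeSet.mpr (hw.2.1 1 (by omega)), fun hc => ?_⟩
  have hsh := nfp_shift hw h3 hc (subset_refl ME)
    (fun i hi hik => hw.2.2.2.2.2.1 i (by omega) hik)
  have := pK_le hsh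
  omega

/-- Some unmarked edge of `G`, if one exists; otherwise the fallback. -/
noncomputable def freshEdge (G : SimpleGraph V) (fb : Sym2 V) (ME : Set (Sym2 V)) : Sym2 V :=
  if h : ∃ e, e ∈ G.edgeSet ∧ e ∉ ME then h.choose else fb

lemma freshEdge_spec {G : SimpleGraph V} {ME : Set (Sym2 V)} (fb : Sym2 V)
    (hex : ∃ e, e ∈ G.edgeSet ∧ e ∉ ME) :
    freshEdge G fb ME ∈ G.edgeSet ∧ freshEdge G fb ME ∉ ME := by
  rw [freshEdge, dif_pos hex]; exact hex.choose_spec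

/-- Bob's one-position strategy modification: attack a minimal `n`-free path if one
exists, otherwise follow the fallback move (made legal if necessary). -/
noncomputable def step (G : SimpleGraph V) (n : ℕ) (fb : Sym2 V) (MV : Set V)
    (ME : Set (Sym2 V)) : Sym2 V :=
  if hp : HasPath G n MV ME then
    if 3 ≤ pK G n MV ME then s(pW hp 1, pW hp 2)
    else if h2 : ∃ e, e ∈ G.edgeSet ∧ pW hp 1 ∈ e ∧ e ∉ pathEdges (pK G n MV ME) (pW hp) ∧ e ∉ ME then
      h2.choose
    else freshEdge G fb ME
  else if fb ∈ G.edgeSet ∧ fb ∉ ME then fb else freshEdge G fb ME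

lemma step_legal {G : SimpleGraph V} {n : ℕ} {MV : Set V} {ME : Set (Sym2 V)} (fb : Sym2 V)
    (hex : ∃ e, e ∈ G.edgeSet ∧ e ∉ ME) :
    step G n fb MV ME ∈ G.edgeSet ∧ step G n fb MV ME ∉ ME := by
  rw [step]
  split_ifs with hp h3 h2 hfb
  · exact attack_fresh hp h3
  · obtain ⟨hA, hB, hC, hD⟩ := h2.choose_spec
    exact ⟨hA, hD⟩
  · exact freshEdge_spec fb hex
  · exact hfb
  · exact freshEdge_spec fb hex

lemma step_eq_fb {G : SimpleGraph V} {n : ℕ} {MV : Set V} {ME : Set (Sym2 V)} {fb : Sym2 V}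
    (hnp : ¬ HasPath G n MV ME)
    (hfb : (∃ e, e ∈ G.edgeSet ∧ e ∉ ME) → fb ∈ G.edgeSet ∧ fb ∉ ME) :
    step G n fb MV ME = fb := by
  rw [step, dif_neg hnp]
  by_cases hex : ∃ e, e ∈ G.edgeSet ∧ e ∉ ME
  · rw [if_pos (hfb hex)]
  · rw [if_neg (fun hc => hex ⟨fb, hc⟩), freshEdge, dif_neg hex]

end VEGame
namespace VEGame

open scoped Classical

variable {V : Type*}

/-- Bob's modified moves, computed from the reversed history of Alice's moves. -/
noncomputable def movesRev (G : SimpleGraph V) (n : ℕ) (B : List V → Sym2 V) :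
    List V → List (Sym2 V)
  | [] => []
  | x :: t =>
    step G n (B (x :: t).reverse) {v | v ∈ x :: t} {e | e ∈ movesRev G n B t} ::
      movesRev G n B t

/-- The modified strategy: follow `B`, but attack an `n`-free path whenever one exists,
and always move legally if possible. -/
noncomputable def stratB (G : SimpleGraph V) (n : ℕ) (B : List V → Sym2 V)
    (h : List V) : Sym2 V :=
  (movesRev G n B h.reverse).headD (B [])

lemma ofFn_succ_eq (a : ℕ → V) (r : ℕ) :
    (List.ofFn fun i : Fin (r+1) => a i) = (List.ofFn fun i : Fin r => a i) ++ [a r] := by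
  rw [List.ofFn_succ']
  simp [List.concat_eq_append]

lemma hist_reverse (a : ℕ → V) (r : ℕ) :
    (List.ofFn fun i : Fin (r+1) => a i).reverse
      = a r :: (List.ofFn fun i : Fin r => a i).reverse := by
  rw [ofFn_succ_eq]; simp

lemma hist_vert_set (a : ℕ → V) (r : ℕ) :
    {v | v ∈ a r :: (List.ofFn fun i : Fin r => a i).reverse} = mVerts a (r+1) := by
  ext v
  simp only [List.mem_cons, List.mem_reverse, List.mem_ofFn, Set.mem_setOf_eq, mVerts]
  constructor
  · rintro (rfl | ⟨i, rfl⟩)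
    · exact ⟨r, by omega, rfl⟩
    · exact ⟨i, by omega, rfl⟩
  · rintro ⟨i, hi, rfl⟩
    rcases Nat.lt_succ_iff_lt_or_eq.mp hi with h | h
    · exact Or.inr ⟨⟨i, h⟩, rfl⟩
    · subst h; exact Or.inl rfl

lemma stratB_key {G : SimpleGraph V} {n : ℕ} {B : List V → Sym2 V} {a : ℕ → V}
    {b : ℕ → Sym2 V} (hcons : ConsistentB (stratB G n B) a b) :
    ∀ r, {e | e ∈ movesRev G n B (List.ofFn fun i : Fin r => a i).reverse} = mEdges b r := by
  have hstep : ∀ r, {e | e ∈ movesRev G n B (List.ofFn fun i : Fin r => a i).reverse} = mEdges b r →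
      b r = step G n (B (List.ofFn fun i : Fin (r+1) => a i)) (mVerts a (r+1)) (mEdges b r) := by
    intro r hkey
    have h1 := hcons r
    rw [stratB, hist_reverse, movesRev] at h1
    simp only [List.headD_cons] at h1
    rw [List.reverse_cons, List.reverse_reverse, ← ofFn_succ_eq, hist_vert_set, hkey] at h1
    exact h1
  intro r
  induction r with
  | zero => ext e; simp [movesRev, mEdges]
  | succ r ih =>
    have hb := hstep r ih
    rw [hist_reverse]
    have hmr : movesRev G n B (a r :: (List.ofFn fun i : Fin r => a i).reverse)
        = b r :: movesRev G n B (List.ofFn fun i : Fin r => a i).reverse := by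
      simp only [movesRev]
      rw [List.reverse_cons, List.reverse_reverse, ← ofFn_succ_eq, hist_vert_set, ih, ← hb]
    rw [Set.ext_iff] at ih
    ext e
    specialize ih e
    simp only [Set.mem_setOf_eq] at ih ⊢
    rw [hmr, mEdges_succ]
    simp only [List.mem_cons, Set.mem_insert_iff, ih]

lemma stratB_recurrence {G : SimpleGraph V} {n : ℕ} {B : List V → Sym2 V} {a : ℕ → V}
    {b : ℕ → Sym2 V} (hcons : ConsistentB (stratB G n B) a b) (r : ℕ) :
    b r = step G n (B (List.ofFn fun i : Fin (r+1) => a i)) (mVerts a (r+1)) (mEdges b r) := by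
  have h1 := hcons r
  rw [stratB, hist_reverse, movesRev] at h1
  simp only [List.headD_cons] at h1
  rw [List.reverse_cons, List.reverse_reverse, ← ofFn_succ_eq, hist_vert_set,
    stratB_key hcons r] at h1
  exact h1

lemma stratB_legal {G : SimpleGraph V} {n : ℕ} {B : List V → Sym2 V} {a : ℕ → V}
    {b : ℕ → Sym2 V} (hcons : ConsistentB (stratB G n B) a b) : BobLegal G b := by
  intro r hex
  rw [stratB_recurrence hcons r]
  refine step_legal _ ?_
  obtain ⟨e, he, hne⟩ := hex
  exact ⟨e, he, hne⟩

lemma stratB_agree {G : SimpleGraph V} {n : ℕ} {B : List V → Sym2 V} {a : ℕ → V}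
    {b : ℕ → Sym2 V} (hcons : ConsistentB (stratB G n B) a b)
    (hleg : BobLegal G (fun r => B (List.ofFn fun i : Fin (r+1) => a i)))
    (hnp : ∀ r, ¬ HasPath G n (mVerts a (r+1)) (mEdges b r)) :
    ∀ r, b r = B (List.ofFn fun i : Fin (r+1) => a i) := by
  intro r
  induction r using Nat.strong_induction_on with
  | _ r ih =>
    have hme : mEdges b r = mEdges (fun r => B (List.ofFn fun i : Fin (r+1) => a i)) r := by
      ext e
      simp only [mEdges, Set.mem_setOf_eq]
      constructor
      · rintro ⟨i, hi, rfl⟩; exact ⟨i, hi, (ih i hi).symm⟩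
      · rintro ⟨i, hi, rfl⟩; exact ⟨i, hi, ih i hi⟩
    rw [stratB_recurrence hcons r]
    apply step_eq_fb (hnp r)
    intro hex
    have h2 := hleg r (by rw [← hme]; obtain ⟨e, he⟩ := hex; exact ⟨e, he.1, he.2⟩)
    rw [← hme] at h2
    exact h2

lemma exists_path_round {G : SimpleGraph V} {n : ℕ} {B : List V → Sym2 V} {a : ℕ → V}
    {b : ℕ → Sym2 V} (hcons : ConsistentB (stratB G n B) a b) (halice : AliceLegal a)
    (hB1 : ∀ a' b', ConsistentB B a' b' → AliceLegal a' → BobLegal G b')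
    (hB2 : ∀ a' b', ConsistentB B a' b' → AliceLegal a' →
      ∃ r k w, IsNFreePath G (mVerts a' (r+1)) (mEdges b' r) n k w) :
    ∃ r, HasPath G n (mVerts a (r+1)) (mEdges b r) := by
  by_contra hc
  push_neg at hc
  have hconsB : ConsistentB B a (fun r => B (List.ofFn fun i : Fin (r+1) => a i)) :=
    fun r => rfl
  have hlegB := hB1 a _ hconsB halice
  have hagree := stratB_agree hcons hlegB hc
  obtain ⟨r, k, w, hw⟩ := hB2 a _ hconsB halice
  refine hc r ⟨k, w, ?_⟩
  have hme : mEdges (fun r => B (List.ofFn fun i : Fin (r+1) => a i)) r = mEdges b r := by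
    ext e
    simp only [mEdges, Set.mem_setOf_eq]
    constructor
    · rintro ⟨i, hi, rfl⟩; exact ⟨i, hi, hagree i⟩
    · rintro ⟨i, hi, rfl⟩; exact ⟨i, hi, (hagree i).symm⟩
  rwa [hme] at hw

end VEGame
namespace VEGame

open scoped Classical

variable {V : Type*}

lemma descent {G : SimpleGraph V} {n : ℕ} {a : ℕ → V} {b : ℕ → Sym2 V} {fb : ℕ → Sym2 V}
    (hb : ∀ r, b r = step G n (fb r) (mVerts a (r+1)) (mEdges b r)) :
    ∀ k r, (∃ w, IsNFreePath G (mVerts a (r+1)) (mEdges b r) n k w) →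
      ∃ r' v, (n : ℕ∞) + 3 ≤ score G a b r' v := by
  intro k
  induction k using Nat.strong_induction_on with
  | _ k IH =>
    intro r hex
    obtain ⟨w0, hw0⟩ := hex
    have hp : HasPath G n (mVerts a (r+1)) (mEdges b r) := ⟨k, w0, hw0⟩
    have hk0k : pK G n (mVerts a (r+1)) (mEdges b r) ≤ k := pK_le hw0
    have hw := pW_spec hp
    set k0 := pK G n (mVerts a (r+1)) (mEdges b r) with hk0def
    have h2k0 : 2 ≤ k0 := hw.1
    by_cases h3 : 3 ≤ k0
    · have hbr : b r = s(pW hp 1, pW hp 2) := by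
        rw [hb r]
        simp only [step]
        rw [dif_pos hp, if_pos h3]
      by_cases hx : a (r+1) = pW hp 1
      · have hpath : IsNFreePath G (mVerts a (r+1+1)) (mEdges b (r+1)) n (k0-1)
            (fun i => pW hp (i+1)) := by
          apply nfp_shift hw h3
          · rw [mEdges_succ, ← hbr]; exact Set.mem_insert _ _
          · exact mEdges_subset_succ b r
          · intro i h1i hik
            rw [mVerts_succ]
            intro hmem
            rcases Set.mem_insert_iff.mp hmem with hc | hc
            · have : i = 1 := hw.2.2.1 i (by omega) 1 (by omega) (by rw [hc, hx])
              omega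
            · exact hw.2.2.2.2.2.1 i (by omega) hik hc
        exact IH (k0-1) (by omega) (r+1) ⟨_, hpath⟩
      · have hpath : IsNFreePath G (mVerts a (r+1+1)) (mEdges b (r+1)) n 2 (pW hp) := by
          apply nfp_short hw h3
          · rw [mEdges_succ, ← hbr]; exact Set.mem_insert _ _
          · exact mEdges_subset_succ b r
          · rw [mVerts_succ]
            intro hmem
            rcases Set.mem_insert_iff.mp hmem with hc | hc
            · exact hx hc.symm
            · exact hw.2.2.2.2.2.1 1 one_pos (by omega) hc
        exact IH 2 (by omega) (r+1) ⟨_, hpath⟩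
    · have hk2 : k0 = 2 := by omega
      have hv1 : pW hp 1 ∉ mVerts a (r+1) := hw.2.2.2.2.2.1 1 one_pos (by omega)
      have hx01 : s(pW hp 0, pW hp 1) ∈ mEdges b r := hw.2.2.2.1
      have hx12 : s(pW hp 1, pW hp 2) ∈ mEdges b r := by
        have h := hw.2.2.2.2.1
        rwa [hk2] at h
      have hG01 : s(pW hp 0, pW hp 1) ∈ G.edgeSet := G.mem_edgeSet.mpr (hw.2.1 0 (by omega))
      have hG12 : s(pW hp 1, pW hp 2) ∈ G.edgeSet := G.mem_edgeSet.mpr (hw.2.1 1 (by omega))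
      have hne : s(pW hp 0, pW hp 1) ≠ s(pW hp 1, pW hp 2) := by
        intro hc
        rw [Sym2.eq_iff] at hc
        rcases hc with ⟨hc1, hc2⟩ | ⟨hc1, hc2⟩
        · have := hw.2.2.1 0 (by omega) 1 (by omega) hc1
          omega
        · have := hw.2.2.1 0 (by omega) 2 (by omega) hc1
          omega
      have hp01 : s(pW hp 0, pW hp 1) ∈ pathEdges k0 (pW hp) := ⟨0, by omega, rfl⟩
      have hp12 : s(pW hp 1, pW hp 2) ∈ pathEdges k0 (pW hp) := ⟨1, by omega, rfl⟩
      have hm1 : pW hp 1 ∈ s(pW hp 0, pW hp 1) := Sym2.mem_mk_right _ _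
      have hm2 : pW hp 1 ∈ s(pW hp 1, pW hp 2) := Sym2.mem_mk_left _ _
      by_cases he : ∃ e, e ∈ G.edgeSet ∧ pW hp 1 ∈ e ∧ e ∉ pathEdges k0 (pW hp) ∧ e ∉ mEdges b r
      · have hbr : b r = he.choose := by
          rw [hb r]
          simp only [step]
          rw [dif_pos hp, if_neg h3, dif_pos he]
        obtain ⟨heG, hev, hepath, heME⟩ := he.choose_spec
        refine ⟨r, pW hp 1, ?_⟩
        rw [score, if_neg hv1]
        set Sm := {e | e ∈ G.edgeSet ∧ e ∈ mEdges b r ∧ pW hp 1 ∈ e ∧ e ∉ pathEdges k0 (pW hp)}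
          with hSmdef
        have hSm : (n : ℕ∞) ≤ Sm.encard := (hw.2.2.2.2.2.2 1 one_pos (by omega)).2
        have hsub : insert (s(pW hp 0, pW hp 1)) (insert (s(pW hp 1, pW hp 2))
            (insert he.choose Sm)) ⊆
            {e | e ∈ G.edgeSet ∧ pW hp 1 ∈ e ∧ e ∈ mEdges b (r+1)} := by
          intro e hmem
          rcases Set.mem_insert_iff.mp hmem with rfl | hmem
          · exact ⟨hG01, hm1, mEdges_subset_succ b r hx01⟩
          rcases Set.mem_insert_iff.mp hmem with rfl | hmem
          · exact ⟨hG12, hm2, mEdges_subset_succ b r hx12⟩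
          rcases Set.mem_insert_iff.mp hmem with rfl | hmem
          · refine ⟨heG, hev, ?_⟩
            rw [mEdges_succ, hbr]
            exact Set.mem_insert _ _
          · exact ⟨hmem.1, hmem.2.2.1, mEdges_subset_succ b r hmem.2.1⟩
        have hn1 : he.choose ∉ Sm := fun hc => heME hc.2.1
        have hn2 : s(pW hp 1, pW hp 2) ∉ insert he.choose Sm := by
          intro hmem
          rcases Set.mem_insert_iff.mp hmem with hc | hc
          · exact heME (hc ▸ hx12)
          · exact hc.2.2.2 hp12
        have hn3 : s(pW hp 0, pW hp 1) ∉ insert (s(pW hp 1, pW hp 2)) (insert he.choose Sm) := by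
          intro hmem
          rcases Set.mem_insert_iff.mp hmem with hc | hmem
          · exact hne hc
          rcases Set.mem_insert_iff.mp hmem with hc | hc
          · exact heME (hc ▸ hx01)
          · exact hc.2.2.2 hp01
        calc (n : ℕ∞) + 3 = ((n + 1) + 1) + 1 := by ring
        _ ≤ ((Sm.encard + 1) + 1) + 1 := by
            exact add_le_add_left (add_le_add_left (add_le_add_left hSm 1) 1) 1
        _ = (insert (s(pW hp 0, pW hp 1)) (insert (s(pW hp 1, pW hp 2))
              (insert he.choose Sm))).encard := by
            rw [Set.encard_insert_of_notMem hn3, Set.encard_insert_of_notMem hn2,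
              Set.encard_insert_of_notMem hn1]
        _ ≤ _ := Set.encard_le_encard hsub
      · have hr1 : 1 ≤ r := by
          obtain ⟨i, hi, -⟩ := hx01
          omega
        refine ⟨r - 1, pW hp 1, ?_⟩
        rw [score]
        have hre : r - 1 + 1 = r := by omega
        have hv1' : pW hp 1 ∉ mVerts a r := fun hc => hv1 (mVerts_subset_succ a r hc)
        rw [hre, if_neg hv1']
        push_neg at he
        set Sn := {e | e ∈ G.edgeSet ∧ pW hp 1 ∈ e ∧ e ∉ pathEdges k0 (pW hp)} with hSndef
        have hSn : (n : ℕ∞) + 1 ≤ Sn.encard := (hw.2.2.2.2.2.2 1 one_pos (by omega)).1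
        have hsub : insert (s(pW hp 0, pW hp 1)) (insert (s(pW hp 1, pW hp 2)) Sn) ⊆
            {e | e ∈ G.edgeSet ∧ pW hp 1 ∈ e ∧ e ∈ mEdges b r} := by
          intro e hmem
          rcases Set.mem_insert_iff.mp hmem with rfl | hmem
          · exact ⟨hG01, hm1, hx01⟩
          rcases Set.mem_insert_iff.mp hmem with rfl | hmem
          · exact ⟨hG12, hm2, hx12⟩
          · exact ⟨hmem.1, hmem.2.1, he e hmem.1 hmem.2.1 hmem.2.2⟩
        have hn2 : s(pW hp 1, pW hp 2) ∉ Sn := fun hc => hc.2.2 hp12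
        have hn3 : s(pW hp 0, pW hp 1) ∉ insert (s(pW hp 1, pW hp 2)) Sn := by
          intro hmem
          rcases Set.mem_insert_iff.mp hmem with hc | hc
          · exact hne hc
          · exact hc.2.2 hp01
        calc (n : ℕ∞) + 3 = ((n + 1) + 1) + 1 := by ring
        _ ≤ ((Sn.encard) + 1) + 1 := by
            exact add_le_add_left (add_le_add_left hSn 1) 1
        _ = (insert (s(pW hp 0, pW hp 1)) (insert (s(pW hp 1, pW hp 2)) Sn)).encard := by
            rw [Set.encard_insert_of_notMem hn3, Set.encard_insert_of_notMem hn2]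
        _ ≤ _ := Set.encard_le_encard hsub

end VEGame
namespace VEGame

open scoped Classical

variable {V : Type*}

lemma path_of_score {G : SimpleGraph V} {n : ℕ} {a : ℕ → V} {b : ℕ → Sym2 V} {r : ℕ} {v : V}
    (h : (n : ℕ∞) + 3 ≤ score G a b r v) :
    ∃ k w, IsNFreePath G (mVerts a (r+1)) (mEdges b r) n k w := by
  rw [score] at h
  by_cases hv : v ∈ mVerts a (r+1)
  · rw [if_pos hv] at h
    exact absurd h (by simp)
  rw [if_neg hv] at h
  set T1 := {e | e ∈ G.edgeSet ∧ v ∈ e ∧ e ∈ mEdges b (r+1)} with hT1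
  set T0 := {e | e ∈ G.edgeSet ∧ v ∈ e ∧ e ∈ mEdges b r} with hT0
  have hsub : T1 ⊆ insert (b r) T0 := by
    rintro e ⟨heG, hev, heM⟩
    rw [mEdges_succ] at heM
    rcases Set.mem_insert_iff.mp heM with rfl | heM
    · exact Set.mem_insert _ _
    · exact Set.mem_insert_of_mem _ ⟨heG, hev, heM⟩
  have hT0card : (n : ℕ∞) + 2 ≤ T0.encard := by
    have h1 : (n : ℕ∞) + 2 + 1 ≤ T0.encard + 1 := by
      calc (n : ℕ∞) + 2 + 1 = (n : ℕ∞) + 3 := by ring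
      _ ≤ T1.encard := h
      _ ≤ (insert (b r) T0).encard := Set.encard_le_encard hsub
      _ ≤ T0.encard + 1 := Set.encard_insert_le _ _
    rwa [ENat.add_le_add_iff_right (by simp : (1:ℕ∞) ≠ ⊤)] at h1
  have h2' : 1 < T0.encard := by
    refine lt_of_lt_of_le ?_ hT0card
    calc (1:ℕ∞) < 2 := by decide
    _ ≤ (n : ℕ∞) + 2 := le_add_self
  obtain ⟨e1, e2, he1, he2, hne⟩ := Set.one_lt_encard_iff.mp h2'
  obtain ⟨heG1, hev1, heM1⟩ := he1
  obtain ⟨heG2, hev2, heM2⟩ := he2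
  obtain ⟨u0, hu0⟩ := Sym2.mem_iff_exists.mp hev1
  obtain ⟨u2, hu2⟩ := Sym2.mem_iff_exists.mp hev2
  have hadj1 : G.Adj v u0 := by rw [hu0] at heG1; exact G.mem_edgeSet.mp heG1
  have hadj2 : G.Adj v u2 := by rw [hu2] at heG2; exact G.mem_edgeSet.mp heG2
  have hu02 : u0 ≠ u2 := by rintro rfl; exact hne (hu0.trans hu2.symm)
  set w : ℕ → V := fun i => if i = 0 then u0 else if i = 1 then v else u2 with hwdef
  have hweq0 : w 0 = u0 := rfl
  have hweq1 : w 1 = v := rfl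
  have hweq2 : w 2 = u2 := rfl
  have h4 : s(w 0, w 1) = e1 := by rw [hweq0, hweq1, hu0, Sym2.eq_swap]
  have h5 : s(w 1, w 2) = e2 := by rw [hweq1, hweq2, hu2]
  refine ⟨2, w, le_refl 2, ?_, ?_, ?_, ?_, ?_, ?_⟩
  · intro i hi
    interval_cases i
    · rw [hweq0, hweq1]; exact hadj1.symm
    · rw [hweq1, hweq2]; exact hadj2
  · intro i hi j hj hij
    have hnv0 : v ≠ u0 := hadj1.ne
    have hnv2 : v ≠ u2 := hadj2.ne
    interval_cases i <;> interval_cases j <;>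
      simp_all [hweq0, hweq1, hweq2]
  · rw [h4]; exact heM1
  · show s(w (2-1), w 2) ∈ mEdges b r
    rw [show (2:ℕ) - 1 = 1 from rfl, h5]; exact heM2
  · intro i h0 hi2
    have : i = 1 := by omega
    subst this
    rw [hweq1]; exact hv
  · intro i h0 hi2
    have : i = 1 := by omega
    subst this
    have hpairle : ({e1, e2} : Set (Sym2 V)).encard ≤ 2 := by
      refine le_trans (Set.encard_insert_le _ _) ?_
      rw [Set.encard_singleton]
      decide
    constructor
    · have hsub2 : T1 \ {e1, e2} ⊆ {e | e ∈ G.edgeSet ∧ w 1 ∈ e ∧ e ∉ pathEdges 2 w} := by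
        rintro e ⟨⟨heG, hev, heM⟩, hnot⟩
        refine ⟨heG, by rw [hweq1]; exact hev, ?_⟩
        rintro ⟨j, hj, rfl⟩
        interval_cases j
        · exact hnot (by rw [h4]; exact Set.mem_insert _ _)
        · exact hnot (by rw [h5]; exact Set.mem_insert_of_mem _ rfl)
      have hcard : (n : ℕ∞) + 1 ≤ (T1 \ {e1, e2}).encard := by
        have hT1sub : T1 ⊆ (T1 \ {e1, e2}) ∪ {e1, e2} := by
          intro e heT
          by_cases hc : e ∈ ({e1, e2} : Set (Sym2 V))
          · exact Or.inr hc
          · exact Or.inl ⟨heT, hc⟩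
        have hstep : (n : ℕ∞) + 1 + 2 ≤ (T1 \ {e1, e2}).encard + 2 := by
          calc (n : ℕ∞) + 1 + 2 = (n : ℕ∞) + 3 := by ring
          _ ≤ T1.encard := h
          _ ≤ (T1 \ {e1, e2}).encard + ({e1, e2} : Set (Sym2 V)).encard :=
              le_trans (Set.encard_le_encard hT1sub) (Set.encard_union_le _ _)
          _ ≤ (T1 \ {e1, e2}).encard + 2 := add_le_add_right hpairle _
        rwa [ENat.add_le_add_iff_right (by simp : (2:ℕ∞) ≠ ⊤)] at hstep
      exact le_trans hcard (Set.encard_le_encard hsub2)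
    · have hsub2 : T0 \ {e1, e2} ⊆
          {e | e ∈ G.edgeSet ∧ e ∈ mEdges b r ∧ w 1 ∈ e ∧ e ∉ pathEdges 2 w} := by
        rintro e ⟨⟨heG, hev, heM⟩, hnot⟩
        refine ⟨heG, heM, by rw [hweq1]; exact hev, ?_⟩
        rintro ⟨j, hj, rfl⟩
        interval_cases j
        · exact hnot (by rw [h4]; exact Set.mem_insert _ _)
        · exact hnot (by rw [h5]; exact Set.mem_insert_of_mem _ rfl)
      have hcard : (n : ℕ∞) ≤ (T0 \ {e1, e2}).encard := by
        have hT0sub : T0 ⊆ (T0 \ {e1, e2}) ∪ {e1, e2} := by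
          intro e heT
          by_cases hc : e ∈ ({e1, e2} : Set (Sym2 V))
          · exact Or.inr hc
          · exact Or.inl ⟨heT, hc⟩
        have hstep : (n : ℕ∞) + 2 ≤ (T0 \ {e1, e2}).encard + 2 := by
          calc (n : ℕ∞) + 2 ≤ T0.encard := hT0card
          _ ≤ (T0 \ {e1, e2}).encard + ({e1, e2} : Set (Sym2 V)).encard :=
              le_trans (Set.encard_le_encard hT0sub) (Set.encard_union_le _ _)
          _ ≤ (T0 \ {e1, e2}).encard + 2 := add_le_add_right hpairle _
        rwa [ENat.add_le_add_iff_right (by simp : (2:ℕ∞) ≠ ⊤)] at hstep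
      exact le_trans hcard (Set.encard_le_encard hsub2)

lemma bobWins_mono {G : SimpleGraph V} {s t : ℕ} (hst : t ≤ s) (h : BobWins G s) :
    BobWins G t := by
  obtain ⟨B, h1, h2⟩ := h
  refine ⟨B, h1, fun a b hc ha => ?_⟩
  obtain ⟨r, v, hr⟩ := h2 a b hc ha
  exact ⟨r, v, le_trans (Nat.cast_le.mpr hst) hr⟩

lemma colVE_iff_bobWins {G : SimpleGraph V} {n : ℕ} :
    (n : ℕ∞) + 4 ≤ colVE G ↔ BobWins G (n+3) := by
  rw [colVE]
  constructor
  · intro h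
    have h' : (n : ℕ∞) + 3 ≤ ⨆ s ∈ {s : ℕ | BobWins G s}, (s : ℕ∞) := by
      have he : (n : ℕ∞) + 4 = ((n : ℕ∞) + 3) + 1 := by ring
      rw [he] at h
      rwa [ENat.add_le_add_iff_right (by simp : (1:ℕ∞) ≠ ⊤)] at h
    by_contra hnw
    have hb : ∀ s ∈ {s : ℕ | BobWins G s}, (s : ℕ∞) ≤ (n : ℕ∞) + 2 := by
      intro s hs
      by_contra hs'
      push_neg at hs'
      have hsn : n + 3 ≤ s := by
        have h2 : ((n + 2 : ℕ) : ℕ∞) < (s : ℕ∞) := by push_cast; exact hs'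
        have := Nat.cast_lt.mp h2
        omega
      exact hnw (bobWins_mono hsn hs)
    have hsup : (⨆ s ∈ {s : ℕ | BobWins G s}, (s : ℕ∞)) ≤ (n : ℕ∞) + 2 := iSup₂_le hb
    have hcon := le_trans h' hsup
    rw [ENat.add_le_add_iff_left (by simp : (n : ℕ∞) ≠ ⊤)] at hcon
    exact absurd hcon (by decide)
  · intro h
    have h1 : ((n + 3 : ℕ) : ℕ∞) ≤ ⨆ s ∈ {s : ℕ | BobWins G s}, (s : ℕ∞) :=
      le_biSup _ h
    calc (n : ℕ∞) + 4 = ((n + 3 : ℕ) : ℕ∞) + 1 := by push_cast; ring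
    _ ≤ (⨆ s ∈ {s : ℕ | BobWins G s}, (s : ℕ∞)) + 1 := add_le_add_left h1 1

end VEGame

/-- `col_ve(G) ≥ n + 4` if and only if Bob has a (legal) strategy guaranteeing that, in
every play in which he follows it, there is a round at which it is Bob's turn and an
`n`-free path exists in the current position.  (In round `r`, when it is Bob's turn, the
marked vertices are `mVerts a (r+1)`—Alice has just moved—and the marked edges are
`mEdges b r`.) -/
theorem colVE_ge_iff_bob_forces_nFreePath {V : Type*} (G : SimpleGraph V) (n : ℕ) :
    (n : ℕ∞) + 4 ≤ colVE G ↔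
      ∃ B : List V → Sym2 V,
        (∀ a b, ConsistentB B a b → AliceLegal a → BobLegal G b) ∧
        (∀ a b, ConsistentB B a b → AliceLegal a →
          ∃ r k w, IsNFreePath G (mVerts a (r + 1)) (mEdges b r) n k w) := by
  rw [colVE_iff_bobWins]
  constructor
  · rintro ⟨B, hB1, hB2⟩
    refine ⟨B, hB1, fun a b hc ha => ?_⟩
    obtain ⟨r, v, hscore⟩ := hB2 a b hc ha
    have hs : (n : ℕ∞) + 3 ≤ score G a b r v := by
      refine le_trans (le_of_eq ?_) hscore
      push_cast
      ring
    obtain ⟨k, w, hw⟩ := path_of_score hs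
    exact ⟨r, k, w, hw⟩
  · rintro ⟨B, hB1, hB2⟩
    refine ⟨stratB G n B, fun a b hc ha => stratB_legal hc, fun a b hc ha => ?_⟩
    obtain ⟨r0, hp0⟩ := exists_path_round hc ha hB1 hB2
    obtain ⟨k, w, hw⟩ := hp0
    obtain ⟨r', v, hs⟩ :=
      descent (fb := fun r => B (List.ofFn fun i : Fin (r+1) => a i))
        (fun r => stratB_recurrence hc r) k r0 ⟨w, hw⟩
    refine ⟨r', v, ?_⟩
    refine le_trans (le_of_eq ?_) hs
    push_cast
    ring
end

section
/- If H is a subgraph of a simple graph G, then col_ve(H) ≤ col_ve(G). -/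
open VEGame

namespace VEGameAux
open VEGame Classical

variable {V : Type*} {G : SimpleGraph V} (H : G.Subgraph)

noncomputable def simStep [Nonempty ↥H.verts] (sa : List ↥H.verts) (x : V) : ↥H.verts :=
  if h : ∃ w : ↥H.verts, (w : V) = x ∧ w ∉ sa then h.choose
  else if h2 : ∃ w : ↥H.verts, w ∉ sa then h2.choose
  else Classical.arbitrary _

structure St {V : Type*} {G : SimpleGraph V} (H : G.Subgraph) : Type _ where
  sa : List ↥H.verts
  sb : List (Sym2 ↥H.verts)
  bs : List (Sym2 V)

open Classical in
noncomputable def step [Nonempty ↥H.verts] (B : List ↥H.verts → Sym2 ↥H.verts)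
    (st : St H) (x : V) : St H :=
  ⟨st.sa ++ [simStep H st.sa x],
   st.sb ++ [B (st.sa ++ [simStep H st.sa x])],
   st.bs ++ [if (∃ f ∈ H.coe.edgeSet, f ∉ st.sb) then
       Sym2.map Subtype.val (B (st.sa ++ [simStep H st.sa x]))
     else if hg : ∃ g ∈ G.edgeSet, g ∉ st.bs then hg.choose
     else Sym2.map Subtype.val (B (st.sa ++ [simStep H st.sa x]))]⟩

noncomputable def run [Nonempty ↥H.verts] (B : List ↥H.verts → Sym2 ↥H.verts)
    (l : List V) : St H := l.foldl (step H B) ⟨[], [], []⟩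

noncomputable def BG [Nonempty ↥H.verts] (B : List ↥H.verts → Sym2 ↥H.verts)
    (l : List V) : Sym2 V :=
  ((run H B l).bs).getLastD (Sym2.map Subtype.val (B []))

theorem run_concat [Nonempty ↥H.verts] (B : List ↥H.verts → Sym2 ↥H.verts)
    (l : List V) (x : V) : run H B (l.concat x) = step H B (run H B l) x := by
  simp [run, List.foldl_concat]

theorem mapEdge {e : Sym2 ↥H.verts} (he : e ∈ H.coe.edgeSet) :
    Sym2.map Subtype.val e ∈ G.edgeSet := by
  induction e using Sym2.ind with
  | _ x y =>
    rw [Sym2.map_pair_eq, SimpleGraph.mem_edgeSet]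
    exact H.adj_sub ((H.coe_adj x y) ▸ he)

section Master
variable [Nonempty ↥H.verts] (B : List ↥H.verts → Sym2 ↥H.verts)
  (a : ℕ → V) (b : ℕ → Sym2 V)

/-- the state after round r -/
noncomputable def st (r : ℕ) : St H := run H B (List.ofFn fun i : Fin r => a i)

/-- simulated Alice moves -/
noncomputable def a' (r : ℕ) : ↥H.verts := simStep H (st H B a r).sa (a r)

/-- simulated Bob moves -/
noncomputable def b' (r : ℕ) : Sym2 ↥H.verts := B ((st H B a r).sa ++ [a' H B a r])

theorem st_succ (r : ℕ) : st H B a (r + 1) = step H B (st H B a r) (a r) := by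
  have : (List.ofFn fun i : Fin (r+1) => a i)
      = (List.ofFn fun i : Fin r => a i).concat (a r) := by
    rw [List.ofFn_succ']; rfl
  rw [st, this, run_concat]; rfl

theorem sa_eq (r : ℕ) : (st H B a r).sa = List.ofFn fun i : Fin r => a' H B a i := by
  induction r with
  | zero => rfl
  | succ n ih =>
    rw [st_succ, List.ofFn_succ', List.concat_eq_append]
    simp only [step, Fin.coe_castSucc, Fin.val_last, ← ih]
    rfl

theorem sb_eq (r : ℕ) : (st H B a r).sb = List.ofFn fun i : Fin r => b' H B a i := by
  induction r with
  | zero => rfl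
  | succ n ih =>
    rw [st_succ, List.ofFn_succ', List.concat_eq_append]
    simp only [step, Fin.coe_castSucc, Fin.val_last, ← ih]
    rfl

theorem mem_sa (v : ↥H.verts) (r : ℕ) :
    v ∈ mVerts (a' H B a) r ↔ v ∈ (st H B a r).sa := by
  rw [sa_eq]
  simp [mVerts, List.mem_ofFn, Set.mem_range, Fin.exists_iff]

theorem mem_sb (e : Sym2 ↥H.verts) (r : ℕ) :
    e ∈ mEdges (b' H B a) r ↔ e ∈ (st H B a r).sb := by
  rw [sb_eq]
  simp [mEdges, List.mem_ofFn, Set.mem_range, Fin.exists_iff]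

theorem b_eq (hcons : ConsistentB (BG H B) a b) (r : ℕ) :
    b r = if (∃ f ∈ H.coe.edgeSet, f ∉ (st H B a r).sb) then
       Sym2.map Subtype.val (b' H B a r)
     else if hg : ∃ g ∈ G.edgeSet, g ∉ (st H B a r).bs then hg.choose
     else Sym2.map Subtype.val (b' H B a r) := by
  have h1 : b r = ((st H B a (r+1)).bs).getLastD (Sym2.map Subtype.val (B [])) := hcons r
  rw [h1, st_succ]
  simp only [step]
  rw [List.getLastD_concat]
  rfl

theorem bs_eq (hcons : ConsistentB (BG H B) a b) (r : ℕ) :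
    (st H B a r).bs = List.ofFn fun i : Fin r => b i := by
  induction r with
  | zero => rfl
  | succ n ih =>
    rw [st_succ, List.ofFn_succ', List.concat_eq_append]
    simp only [step, Fin.coe_castSucc, Fin.val_last, ← ih]
    congr 1
    rw [b_eq H B a b hcons n]
    rfl

theorem mem_bs (hcons : ConsistentB (BG H B) a b) (e : Sym2 V) (r : ℕ) :
    e ∈ mEdges b r ↔ e ∈ (st H B a r).bs := by
  rw [bs_eq H B a b hcons]
  simp [mEdges, List.mem_ofFn, Set.mem_range, Fin.exists_iff]

theorem master (hcons : ConsistentB (BG H B) a b) (hal : AliceLegal a) :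
    ∃ a'' b'', ConsistentB B a'' b'' ∧ AliceLegal a'' ∧
      (BobLegal H.coe b'' → BobLegal G b) ∧
      (∀ (s : ℕ) r v, (s : ℕ∞) ≤ score H.coe a'' b'' r v →
        ∃ r' v', (s : ℕ∞) ≤ score G a b r' v') := by
  have hinj : Function.Injective (Sym2.map (Subtype.val : ↥H.verts → V)) :=
    Sym2.map.injective Subtype.coe_injective
  have hmEmono : ∀ (i j : ℕ), i ≤ j → mEdges (b' H B a) i ⊆ mEdges (b' H B a) j := by
    rintro i j hij e ⟨k, hk, he⟩; exact ⟨k, by omega, he⟩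
  refine ⟨a' H B a, b' H B a, ?_, ?_, ?_, ?_⟩
  · -- ConsistentB
    intro r
    show B ((st H B a r).sa ++ [a' H B a r]) = _
    rw [sa_eq, List.ofFn_succ', List.concat_eq_append]
    rfl
  · -- AliceLegal
    rintro r ⟨v, hv⟩
    rw [mem_sa] at hv
    show ¬ _ ∈ mVerts (a' H B a) r
    rw [mem_sa]
    show simStep H (st H B a r).sa (a r) ∉ _
    unfold simStep
    split_ifs with h1 h2
    · exact h1.choose_spec.2
    · exact h2.choose_spec
    · exact absurd ⟨v, hv⟩ h2
  · -- BobLegal transfer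
    rintro hBL r ⟨e, heG, heM⟩
    rw [b_eq H B a b hcons r]
    by_cases hex : ∃ f ∈ H.coe.edgeSet, f ∉ (st H B a r).sb
    · rw [if_pos hex]
      have hx : ∃ f ∈ H.coe.edgeSet, f ∉ mEdges (b' H B a) r := by
        obtain ⟨f, hf1, hf2⟩ := hex
        exact ⟨f, hf1, fun hmem => hf2 ((mem_sb H B a f r).1 hmem)⟩
      obtain ⟨h1, h2⟩ := hBL r hx
      refine ⟨mapEdge H h1, ?_⟩
      rintro ⟨i, hir, hbi⟩
      have hexi : ∃ f ∈ H.coe.edgeSet, f ∉ (st H B a i).sb := by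
        obtain ⟨f, hf1, hf2⟩ := hx
        exact ⟨f, hf1, fun hmem => hf2 (hmEmono i r (le_of_lt hir) ((mem_sb H B a f i).2 hmem))⟩
      rw [b_eq H B a b hcons i, if_pos hexi] at hbi
      exact h2 ⟨i, hir, hinj hbi⟩
    · rw [if_neg hex]
      have hg : ∃ g ∈ G.edgeSet, g ∉ (st H B a r).bs :=
        ⟨e, heG, fun hmem => heM ((mem_bs H B a b hcons e r).2 hmem)⟩
      rw [dif_pos hg]
      exact ⟨hg.choose_spec.1, fun hmem =>
        hg.choose_spec.2 ((mem_bs H B a b hcons _ r).1 hmem)⟩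
  · -- score transfer
    intro s r v hsc
    by_cases hv : v ∈ mVerts (a' H B a) (r + 1)
    · refine ⟨0, (Classical.arbitrary ↥H.verts : ↥H.verts), le_trans ?_ zero_le⟩
      simpa [score, hv] using hsc
    · refine ⟨r, (v : V), ?_⟩
      have hvG : (v : V) ∉ mVerts a (r + 1) := by
        rintro ⟨i, hir, hai⟩
        apply hv
        by_cases hvi : v ∈ mVerts (a' H B a) i
        · obtain ⟨j, hj, hje⟩ := hvi
          exact ⟨j, by omega, hje⟩
        · rw [mem_sa] at hvi
          have hcond : ∃ w : ↥H.verts, (w : V) = a i ∧ w ∉ (st H B a i).sa :=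
            ⟨v, hai.symm ▸ rfl, hvi⟩
          have h1 : a' H B a i = hcond.choose := by
            show simStep H (st H B a i).sa (a i) = _
            rw [simStep, dif_pos hcond]
          have h2 := hcond.choose_spec
          have : a' H B a i = v := by
            rw [h1]
            exact Subtype.coe_injective (h2.1.trans hai)
          exact ⟨i, by omega, this⟩
      have hsub : Sym2.map Subtype.val ''
            {e | e ∈ H.coe.edgeSet ∧ v ∈ e ∧ e ∈ mEdges (b' H B a) (r + 1)} ⊆
          {e | e ∈ G.edgeSet ∧ (v : V) ∈ e ∧ e ∈ mEdges b (r + 1)} := by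
        rintro - ⟨e, ⟨he1, he2, he3⟩, rfl⟩
        refine ⟨mapEdge H he1, Sym2.mem_map.2 ⟨v, he2, rfl⟩, ?_⟩
        have hP : ∃ i, b' H B a i = e ∧ i < r + 1 := by
          obtain ⟨i, hi, hbe⟩ := he3; exact ⟨i, hbe, hi⟩
        obtain ⟨hb0, hlt0⟩ := Nat.find_spec hP
        have hnot : e ∉ mEdges (b' H B a) (Nat.find hP) := by
          rintro ⟨j, hj, hje⟩
          exact Nat.find_min hP hj ⟨hje, by omega⟩
        have hexi : ∃ f ∈ H.coe.edgeSet, f ∉ (st H B a (Nat.find hP)).sb :=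
          ⟨e, he1, fun hmem => hnot ((mem_sb H B a e _).2 hmem)⟩
        refine ⟨Nat.find hP, hlt0, ?_⟩
        rw [b_eq H B a b hcons (Nat.find hP), if_pos hexi, hb0]
      rw [score, if_neg hv] at hsc
      rw [score, if_neg hvG]
      calc (s : ℕ∞) ≤ _ := hsc
        _ = (Sym2.map Subtype.val ''
            {e | e ∈ H.coe.edgeSet ∧ v ∈ e ∧ e ∈ mEdges (b' H B a) (r + 1)}).encard :=
          (hinj.encard_image _).symm
        _ ≤ _ := Set.encard_mono hsub

end Master
end VEGameAux

theorem bobWins_of_subgraph {V : Type*} {G : SimpleGraph V} (H : G.Subgraph)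
    {s : ℕ} (h : BobWins H.coe s) : BobWins G s := by
  classical
  obtain ⟨B, hBleg, hBwin⟩ := h
  haveI : Nonempty ↥H.verts := ⟨(B []).out.1⟩
  open VEGameAux in
  refine ⟨BG H B, ?_, ?_⟩ <;> intro a b hcons hal
  case _ =>
    obtain ⟨a', b', hc', hal', himp, _⟩ := master H B a b hcons hal
    exact himp (hBleg a' b' hc' hal')
  case _ =>
    obtain ⟨a', b', hc', hal', _, htrans⟩ := master H B a b hcons hal
    obtain ⟨r, v, hrv⟩ := hBwin a' b' hc' hal'
    exact htrans s r v hrv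


/-- If `H` is a subgraph of `G` (its vertex set is a subset of that of `G` and its edges
form a subset of the edges of `G`), then `col_ve(H) ≤ col_ve(G)`. -/
theorem colVE_subgraph_le {V : Type*} (G : SimpleGraph V) (H : G.Subgraph) :
    colVE H.coe ≤ colVE G := by
  unfold colVE
  refine add_le_add_left ?_ 1
  refine iSup₂_le fun s hs => ?_
  exact le_iSup₂_of_le s (bobWins_of_subgraph H hs) le_rfl
end

section
/- Let G be a simple graph and d ∈ ℕ. If the edges of G can be oriented so that every vertex has out-degree at most d (i.e., G has a d-bounded orientation), then col_ve(G) ≤ d+2. -/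
open VEGame

section Aux

variable {V : Type*}

open Classical in
noncomputable def pickV (S : Set V) (t : V) : V :=
  if t ∈ S then (if h : ∃ v, v ∉ S then h.choose else t) else t

lemma pickV_not_mem {S : Set V} {t : V} (h : ∃ v, v ∉ S) : pickV S t ∉ S := by
  classical
  rw [pickV]
  by_cases ht : t ∈ S
  · rw [if_pos ht, dif_pos h]; exact h.choose_spec
  · rw [if_neg ht]; exact ht

lemma pickV_eq {S : Set V} {t : V} (h : t ∉ S) : pickV S t = t := by
  classical
  rw [pickV, if_neg h]

noncomputable def play [Nonempty V] (B : List V → Sym2 V) (head : Sym2 V → V) :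
    ℕ → V × Sym2 V
  | r =>
    (pickV {v | ∃ i : ℕ, ∃ _ : i < r, (play B head i).1 = v}
        (if h : 0 < r then head (play B head (r - 1)).2 else Classical.arbitrary V),
      B (List.ofFn fun i : Fin (r + 1) =>
        if h : i.1 < r then (play B head i.1).1 else
          pickV {v | ∃ i : ℕ, ∃ _ : i < r, (play B head i).1 = v}
            (if h : 0 < r then head (play B head (r - 1)).2 else Classical.arbitrary V)))
  termination_by r => r
  decreasing_by all_goals omega

lemma mVerts_mono (a : ℕ → V) {m n : ℕ} (h : m ≤ n) : mVerts a m ⊆ mVerts a n := by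
  rintro v ⟨i, hi, rfl⟩
  exact ⟨i, lt_of_lt_of_le hi h, rfl⟩

lemma self_mem_mVerts (a : ℕ → V) {i r : ℕ} (h : i < r) : a i ∈ mVerts a r :=
  ⟨i, h, rfl⟩

end Aux

section Play

variable {V : Type*} [Nonempty V] (B : List V → Sym2 V) (head : Sym2 V → V)

noncomputable def aSeq : ℕ → V := fun r => (play B head r).1

noncomputable def bSeq : ℕ → Sym2 V := fun r => (play B head r).2

lemma setEq (r : ℕ) :
    {v | ∃ i : ℕ, ∃ _ : i < r, (play B head i).1 = v} = mVerts (aSeq B head) r := by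
  ext v
  simp only [mVerts, aSeq, Set.mem_setOf_eq, exists_prop]

lemma play_fst (r : ℕ) : aSeq B head r =
    pickV (mVerts (aSeq B head) r)
      (if 0 < r then head (bSeq B head (r - 1)) else Classical.arbitrary V) := by
  conv_lhs => rw [aSeq, play]
  rw [setEq, dite_eq_ite]
  rfl

lemma play_snd (r : ℕ) : bSeq B head r =
    B (List.ofFn fun i : Fin (r + 1) => aSeq B head i) := by
  conv_lhs => rw [bSeq, play]
  show B _ = B _
  refine congrArg B (congrArg _ (funext fun i => ?_))
  by_cases h : (i : ℕ) < r
  · rw [dif_pos h]; rfl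
  · rw [dif_neg h]
    have hir : (i : ℕ) = r := by omega
    rw [hir]
    show _ = (play B head r).1
    conv_rhs => rw [play]

lemma aSeq_legal : AliceLegal (aSeq B head) := by
  intro r hex
  rw [play_fst]
  exact pickV_not_mem hex

lemma head_marked (i : ℕ) :
    head (bSeq B head i) ∈ mVerts (aSeq B head) (i + 2) := by
  by_cases h : head (bSeq B head i) ∈ mVerts (aSeq B head) (i + 1)
  · exact mVerts_mono _ (by omega) h
  · have : aSeq B head (i + 1) = head (bSeq B head i) := by
      rw [play_fst]
      simp only [Nat.succ_sub_one, if_pos (Nat.succ_pos i)]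
      exact pickV_eq h
    rw [← this]
    exact self_mem_mVerts _ (by omega)

end Play

/-- If the edges of `G` can be oriented (each edge `e` being assigned a head `head e ∈ e`)
so that every vertex has out-degree at most `d`, then `col_ve(G) ≤ d + 2`. -/
theorem colVE_le_of_bounded_orientation {V : Type*} (G : SimpleGraph V) (d : ℕ)
    (head : Sym2 V → V)
    (hhead : ∀ e ∈ G.edgeSet, head e ∈ e)
    (hout : ∀ v : V, {e | e ∈ G.edgeSet ∧ v ∈ e ∧ head e ≠ v}.encard ≤ (d : ℕ∞)) :
    colVE G ≤ (d : ℕ∞) + 2 := by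
  have key : ∀ s : ℕ, BobWins G s → (s : ℕ∞) ≤ (d : ℕ∞) + 1 := by
    intro s hs
    obtain ⟨B, hleg, hforce⟩ := hs
    cases isEmpty_or_nonempty V with
    | inl hV =>
      obtain ⟨p, -⟩ := (B []).exists_rep
      exact (IsEmpty.false p.1).elim
    | inr hV =>
      set a := aSeq B head with ha
      set b := bSeq B head with hb
      have hcons : ConsistentB B a b := fun r => play_snd B head r
      have hAL : AliceLegal a := aSeq_legal B head
      obtain ⟨r, v, hrv⟩ := hforce a b hcons hAL
      rw [score] at hrv
      split at hrv
      · exact le_trans hrv zero_le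
      · rename_i hv
        have hsub : {e | e ∈ G.edgeSet ∧ v ∈ e ∧ e ∈ mEdges b (r + 1)} ⊆
            {e | e ∈ G.edgeSet ∧ v ∈ e ∧ head e ≠ v} ∪ {b r} := by
          rintro e ⟨he, hve, i, hi, rfl⟩
          by_cases hh : head (b i) = v
          · right
            have : i = r := by
              by_contra hir
              have hi' : i < r := by omega
              have := head_marked B head i
              rw [← hb, hh] at this
              exact hv (mVerts_mono _ (by omega) this)
            simp [this]
          · exact Or.inl ⟨he, hve, hh⟩
        refine le_trans hrv (le_trans (Set.encard_le_encard hsub) ?_)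
        refine le_trans (Set.encard_union_le _ _) ?_
        have h1 := hout v
        have h2 : ({b r} : Set (Sym2 V)).encard = 1 := Set.encard_singleton _
        rw [h2]
        exact add_le_add h1 le_rfl
  rw [colVE]
  have hsup : (⨆ s ∈ {s : ℕ | BobWins G s}, (s : ℕ∞)) ≤ (d : ℕ∞) + 1 :=
    iSup₂_le fun s hs => key s hs
  calc (⨆ s ∈ {s : ℕ | BobWins G s}, (s : ℕ∞)) + 1 ≤ ((d : ℕ∞) + 1) + 1 :=
        add_le_add hsup le_rfl
    _ = (d : ℕ∞) + 2 := by ring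
end
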